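/- For every server layout S = {s_1 < … < s_k} on the line, C(A*[S], S) holds: the PTCP algorithm A*[S] is faithful, surrounding-oriented, and satisfies condition (C3) with bound α(S). -/

import Mathlib

noncomputable section

namespace OFAL

/-! ### Basic model: servers are points of the real line, given as a `Finset ℝ`. -/

/-- Decrease the remaining capacity of server `m` by one. -/
def decCap (c : ℝ → ℕ) (m : ℝ) : ℝ → ℕ := fun x => if x = m then c x - 1 else c x

/-- Remaining capacities after a list of matches. -/
def useCaps : (ℝ → ℕ) → List ℝ → (ℝ → ℕ)
  | c, [] => c
  | c, m :: ms => useCaps (decCap c m) ms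

/-- The set of servers that are still free. -/
def freeOf (S : Finset ℝ) (c : ℝ → ℕ) : Finset ℝ := S.filter fun x => 0 < c x

/-- Run an algorithm given by a choice function `f` (mapping the position of the
current request and the current set of free servers to the chosen server)
on a request sequence, producing the list of matched servers. -/
def runC (S : Finset ℝ) (f : ℝ → Finset ℝ → ℝ) : (ℝ → ℕ) → List ℝ → List ℝ
  | _, [] => []
  | c, r :: rs => f r (freeOf S c) :: runC S f (decCap c (f r (freeOf S c))) rs

/-- The server with which the algorithm matches the `i`-th request (0-indexed). -/
def mtch (S : Finset ℝ) (f : ℝ → Finset ℝ → ℝ) (c : ℝ → ℕ) (σ : List ℝ) (i : ℕ) : ℝ :=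
  (runC S f c σ).getD i 0

/-- Total cost incurred by the algorithm on a request sequence. -/
def algCost (S : Finset ℝ) (f : ℝ → Finset ℝ → ℝ) (c : ℝ → ℕ) (σ : List ℝ) : ℝ :=
  ((σ.zip (runC S f c σ)).map fun p => |p.1 - p.2|).sum

def totalCap (S : Finset ℝ) (c : ℝ → ℕ) : ℕ := ∑ x ∈ S, c x

/-- A valid request sequence: at most as many requests as total capacity. -/
def ValidSeq (S : Finset ℝ) (c : ℝ → ℕ) (σ : List ℝ) : Prop := σ.length ≤ totalCap S c

/-- A valid (offline) assignment of requests to servers. -/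
def ValidAssign (S : Finset ℝ) (c : ℝ → ℕ) (σ : List ℝ) (m : ℕ → ℝ) : Prop :=
  (∀ i < σ.length, m i ∈ S) ∧
  ∀ x ∈ S, ((List.range σ.length).filter fun i => m i = x).length ≤ c x

def assignCost (σ : List ℝ) (m : ℕ → ℝ) : ℝ :=
  ∑ i ∈ Finset.range σ.length, |σ.getD i 0 - m i|

/-- Cost of an optimal offline assignment. -/
def Opt (S : Finset ℝ) (c : ℝ → ℕ) (σ : List ℝ) : ℝ :=
  sInf { t | ∃ m, ValidAssign S c σ m ∧ assignCost σ m = t }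

/-- Unit capacities. -/
def c1 : ℝ → ℕ := fun _ => 1

/-- The set of servers still free after the first `t` matches of `ms`. -/
def freeAfter (S : Finset ℝ) (c : ℝ → ℕ) (ms : List ℝ) (t : ℕ) : Finset ℝ :=
  S.filter fun x => (ms.take t).count x < c x

/-! ### MPFS algorithms -/

/-- A choice function is an MPFS algorithm if it is given by a family of linear
orders (priorities, encoded by an injective rank function) on the servers, one for
each request position, and selects the free server with the highest priority. -/
def IsMPFS (S : Finset ℝ) (f : ℝ → Finset ℝ → ℝ) : Prop :=
  ∃ rank : ℝ → ℝ → ℕ,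
    (∀ r : ℝ, Set.InjOn (rank r) (S : Set ℝ)) ∧
    ∀ (r : ℝ) (F : Finset ℝ), F ⊆ S → F.Nonempty →
      f r F ∈ F ∧ ∀ y ∈ F, rank r (f r F) ≤ rank r y

/-! ### Geometry of the server layout -/

/-- `a` and `b` are adjacent servers of `T` with `a < b`. -/
def IsGapPair (T : Finset ℝ) (a b : ℝ) : Prop :=
  a ∈ T ∧ b ∈ T ∧ a < b ∧ ∀ x ∈ T, x ≤ a ∨ b ≤ x

/-- The maximum distance between two adjacent servers. -/
def maxGap (T : Finset ℝ) : ℝ := sSup { d | ∃ a b, IsGapPair T a b ∧ d = b - a }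

/-- The minimum distance between two adjacent servers. -/
def minGap (T : Finset ℝ) : ℝ := sInf { d | ∃ a b, IsGapPair T a b ∧ d = b - a }

/-- `L(T)`: the ratio of the diameter of `T` to its maximum gap (0 if `|T| ≤ 1`). -/
def Lval (T : Finset ℝ) : ℝ :=
  if 2 ≤ T.card then (sSup (T : Set ℝ) - sInf (T : Set ℝ)) / maxGap T else 0

/-- `α(S) = max_{T ⊆ S} L(T)`. -/
def alpha (S : Finset ℝ) : ℝ :=
  (S.powerset.image Lval).max'
    ⟨Lval ∅, Finset.mem_image_of_mem _ (Finset.empty_mem_powerset S)⟩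

/-- The aspect ratio `U(S)`: diameter over minimum gap. -/
def Uval (S : Finset ℝ) : ℝ := (sSup (S : Set ℝ) - sInf (S : Set ℝ)) / minGap S

/-! ### Surrounding servers -/

/-- `x` is a surrounding server of a request at `r` among the free servers `F`. -/
def IsSurrounding (F : Finset ℝ) (r x : ℝ) : Prop :=
  x ∈ F ∧
    (if r ∈ F then x = r
     else (x < r ∧ ∀ y ∈ F, y ≤ x ∨ r < y) ∨ (r < x ∧ ∀ y ∈ F, y < r ∨ x ≤ y))

/-- No element of `F` lies strictly between `u` and `v`. -/
def NoFreeBetween (F : Finset ℝ) (u v : ℝ) : Prop :=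
  ∀ y ∈ F, ¬ (min u v < y ∧ y < max u v)

/-- A choice-function algorithm is surrounding-oriented if on every request
sequence it matches every request with one of its surrounding servers. -/
def SurrOriented (S : Finset ℝ) (f : ℝ → Finset ℝ → ℝ) : Prop :=
  ∀ (c : ℝ → ℕ) (σ : List ℝ), ValidSeq S c σ → ∀ i < σ.length,
    IsSurrounding (freeAfter S c (runC S f c σ) i) (σ.getD i 0) (mtch S f c σ i)

/-! ### Faithful algorithms -/

/-- `τ` is closer than `σ` with respect to the algorithm. -/
def Closer (S : Finset ℝ) (f : ℝ → Finset ℝ → ℝ) (c : ℝ → ℕ) (σ τ : List ℝ) : Prop :=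
  τ.length = σ.length ∧
  (∀ i < σ.length, τ.getD i 0 ∈ Set.uIcc (σ.getD i 0) (mtch S f c σ i)) ∧
  ∃ i < σ.length, |τ.getD i 0 - mtch S f c σ i| < |σ.getD i 0 - mtch S f c σ i|

/-- A faithful algorithm matches a closer request sequence with the same servers. -/
def FaithfulC (S : Finset ℝ) (f : ℝ → Finset ℝ → ℝ) : Prop :=
  ∀ (c : ℝ → ℕ) (σ τ : List ℝ), ValidSeq S c σ → Closer S f c σ τ →
    ∀ i < σ.length, mtch S f c τ i = mtch S f c σ i

/-- `σ` is opposite w.r.t. the algorithm: there is an optimal assignment `m` such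
that every request lies between its online server and its offline server. -/
def OppositeC (S : Finset ℝ) (f : ℝ → Finset ℝ → ℝ) (c : ℝ → ℕ) (σ : List ℝ) : Prop :=
  ∃ m : ℕ → ℝ, ValidAssign S c σ m ∧ assignCost σ m = Opt S c σ ∧
    ∀ i < σ.length, σ.getD i 0 ∈ Set.uIcc (mtch S f c σ i) (m i)

/-! ### Hybrid algorithms (unit capacities) -/

/-- The list of matches of the hybrid algorithm `H_{i,s}` (with `i` 1-indexed):
the first `i-1` requests are matched as by the algorithm, the `i`-th is matched
with `s`, and the rest are matched by the algorithm's choice function. -/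
def hybridRun (S : Finset ℝ) (f : ℝ → Finset ℝ → ℝ) (c : ℝ → ℕ)
    (σ : List ℝ) (i : ℕ) (s : ℝ) : List ℝ :=
  runC S f c (σ.take (i-1)) ++
    s :: runC S f (decCap (useCaps c (runC S f c (σ.take (i-1)))) s) (σ.drop i)

/-- The data produced by the singleton-difference lemma for the hybrid `H_{i,s}`:
for `i ≤ t ≤ t*` the free sets of `A` and of `H_{i,s}` differ exactly by the
singletons `{a t}` and `{h t}`, and they agree for `t ≥ t* + 1`. -/
def HybridData (S : Finset ℝ) (f : ℝ → Finset ℝ → ℝ) (σ : List ℝ)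
    (i : ℕ) (s : ℝ) (tstar : ℕ) (a h : ℕ → ℝ) : Prop :=
  i ≤ tstar ∧ tstar + 1 ≤ S.card ∧
  a i = s ∧ h i = mtch S f c1 σ (i-1) ∧
  (∀ t, i ≤ t → t ≤ tstar →
    freeAfter S c1 (runC S f c1 σ) t \ freeAfter S c1 (hybridRun S f c1 σ i s) t = {a t} ∧
    freeAfter S c1 (hybridRun S f c1 σ i s) t \ freeAfter S c1 (runC S f c1 σ) t = {h t}) ∧
  ∀ t, tstar + 1 ≤ t →
    freeAfter S c1 (runC S f c1 σ) t = freeAfter S c1 (hybridRun S f c1 σ i s) t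

/-! ### The condition `C(A,T)` -/

/-- Condition (C3). -/
def C3 (S : Finset ℝ) (f : ℝ → Finset ℝ → ℝ) : Prop :=
  2 ≤ S.card →
  ∀ σ : List ℝ, σ.length = S.card →
  ∀ i, 1 ≤ i → i ≤ S.card →
  ∀ s ∈ freeAfter S c1 (runC S f c1 σ) (i-1),
    s ≠ mtch S f c1 σ (i-1) →
    (IsSurrounding (freeAfter S c1 (runC S f c1 σ) (i-1)) (σ.getD (i-1) 0) s ∨
      ((∃! x, IsSurrounding (freeAfter S c1 (runC S f c1 σ) (i-1)) (σ.getD (i-1) 0) x) ∧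
        NoFreeBetween (freeAfter S c1 (runC S f c1 σ) (i-1)) s (mtch S f c1 σ (i-1)))) →
    ∀ tstar a h, HybridData S f σ i s tstar a h →
      |h tstar - σ.getD (i-1) 0| ≤ alpha S * |σ.getD (i-1) 0 - a i|

/-- The condition `C(A,S)`: faithful, surrounding-oriented, and (C3). -/
def CProp (S : Finset ℝ) (f : ℝ → Finset ℝ → ℝ) : Prop :=
  FaithfulC S f ∧ SurrOriented S f ∧ C3 S f

/-! ### The PTCP algorithm -/

/-- The critical point offset `x = D(Δ₂+D)/(Δ₁+Δ₂+2D)`. -/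
def ptcpX (S : Finset ℝ) (sa sb : ℝ) : ℝ :=
  (sb - sa) * ((sSup (S : Set ℝ) - sb) + (sb - sa)) /
    ((sa - sInf (S : Set ℝ)) + (sSup (S : Set ℝ) - sb) + 2 * (sb - sa))

/-- `IsPTCP S f` holds iff `f` behaves (on nonempty sets of free servers of `S`)
like the recursively defined algorithm PTCP: split `S` at (some) maximum gap
`(sa, sb)` into `S₁` and `S₂`, requests at most `sa + x` preferring `S₁`,
requests beyond preferring `S₂`. -/
inductive IsPTCP : Finset ℝ → (ℝ → Finset ℝ → ℝ) → Prop
  | single (s : ℝ) (f : ℝ → Finset ℝ → ℝ)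
      (h : ∀ (r : ℝ) (F : Finset ℝ), F ⊆ ({s} : Finset ℝ) → F.Nonempty → f r F = s) :
      IsPTCP {s} f
  | split (S : Finset ℝ) (f f₁ f₂ : ℝ → Finset ℝ → ℝ) (sa sb : ℝ)
      (hcard : 2 ≤ S.card) (hsa : sa ∈ S) (hsb : sb ∈ S) (hlt : sa < sb)
      (hadj : ∀ x ∈ S, x ≤ sa ∨ sb ≤ x)
      (hmax : sb - sa = maxGap S)
      (h1 : IsPTCP (S.filter (· ≤ sa)) f₁)
      (h2 : IsPTCP (S.filter (sb ≤ ·)) f₂)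
      (hf : ∀ (r : ℝ) (F : Finset ℝ), F ⊆ S → F.Nonempty →
        f r F =
          if ¬(F.filter (sb ≤ ·)).Nonempty ∨
             (r ≤ sa + ptcpX S sa sb ∧ (F.filter (· ≤ sa)).Nonempty)
          then f₁ r (F.filter (· ≤ sa))
          else f₂ r (F.filter (sb ≤ ·))) :
      IsPTCP S f

/-! ### The extended algorithm `A_{d,x}` -/

/-- The algorithm `A_{d,x}`: requests at most `sk + x` are served by `A` on `S`
(except when all of `S` is full, then by `s_{k+1}`), requests beyond `sk + x`
are served by `s_{k+1}` (except when it is full, then by `A` on `S`). -/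
def extChoice (S : Finset ℝ) (f : ℝ → Finset ℝ → ℝ) (sk skp1 x : ℝ) :
    ℝ → Finset ℝ → ℝ :=
  fun r F =>
    if r ≤ sk + x then
      (if (F ∩ S).Nonempty then f r (F ∩ S) else skp1)
    else
      (if skp1 ∈ F then skp1 else f r (F ∩ S))

/-! ### General deterministic online algorithms -/

/-- The server with which the online algorithm `A` (which sees the requests
processed so far and the current request) matches the `i`-th request (0-indexed). -/
def omatch (A : List ℝ → ℝ → ℝ) (σ : List ℝ) (i : ℕ) : ℝ := A (σ.take i) (σ.getD i 0)

def ocost (A : List ℝ → ℝ → ℝ) (σ : List ℝ) : ℝ :=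
  ∑ i ∈ Finset.range σ.length, |σ.getD i 0 - omatch A σ i|

/-- The set of servers free for the online algorithm just before the `i`-th request. -/
def ofree (S : Finset ℝ) (c : ℝ → ℕ) (A : List ℝ → ℝ → ℝ) (σ : List ℝ) (i : ℕ) :
    Finset ℝ :=
  S.filter fun x => ((List.range i).filter fun j => omatch A σ j = x).length < c x

/-- `A` is a (correct) deterministic online algorithm for `OFAL(S,c)`:
it always matches a request with a free server. -/
def IsOnline (S : Finset ℝ) (c : ℝ → ℕ) (A : List ℝ → ℝ → ℝ) : Prop :=
  ∀ σ : List ℝ, ValidSeq S c σ → ∀ i < σ.length, omatch A σ i ∈ ofree S c A σ i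

def OSurrOriented (S : Finset ℝ) (c : ℝ → ℕ) (A : List ℝ → ℝ → ℝ) : Prop :=
  ∀ σ : List ℝ, ValidSeq S c σ → ∀ i < σ.length,
    IsSurrounding (ofree S c A σ i) (σ.getD i 0) (omatch A σ i)

def OCloser (A : List ℝ → ℝ → ℝ) (σ τ : List ℝ) : Prop :=
  τ.length = σ.length ∧
  (∀ i < σ.length, τ.getD i 0 ∈ Set.uIcc (σ.getD i 0) (omatch A σ i)) ∧
  ∃ i < σ.length, |τ.getD i 0 - omatch A σ i| < |σ.getD i 0 - omatch A σ i|

def OFaithful (S : Finset ℝ) (c : ℝ → ℕ) (A : List ℝ → ℝ → ℝ) : Prop :=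
  ∀ σ τ : List ℝ, ValidSeq S c σ → OCloser A σ τ →
    ∀ i < σ.length, omatch A τ i = omatch A σ i

def OOpposite (S : Finset ℝ) (c : ℝ → ℕ) (A : List ℝ → ℝ → ℝ) (σ : List ℝ) : Prop :=
  ∃ m : ℕ → ℝ, ValidAssign S c σ m ∧ assignCost σ m = Opt S c σ ∧
    ∀ i < σ.length, σ.getD i 0 ∈ Set.uIcc (omatch A σ i) (m i)

/-- `Rate(σ) = A(σ)/Opt(σ)`, with the conventions for `Opt(σ) = 0`. -/
def Rate (S : Finset ℝ) (c : ℝ → ℕ) (A : List ℝ → ℝ → ℝ) (σ : List ℝ) : EReal :=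
  if 0 < Opt S c σ then (((ocost A σ) / Opt S c σ : ℝ) : EReal)
  else if 0 < ocost A σ then ⊤ else 1

/-! ### The permutation algorithm -/

/-- An execution of the permutation algorithm on `σ`, producing matches `p`:
there is a chain of minimum-cost assignments of the prefixes whose used server
multisets grow one server at a time, `p i` being the server added at step `i`. -/
def PermExec (S : Finset ℝ) (c : ℝ → ℕ) (σ : List ℝ) (p : ℕ → ℝ) : Prop :=
  ∃ M : ℕ → ℕ → ℝ,
    (∀ i ≤ σ.length,
      ValidAssign S c (σ.take i) (M i) ∧
      assignCost (σ.take i) (M i) = Opt S c (σ.take i)) ∧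
    ∀ i < σ.length,
      (((List.range (i+1)).map (M (i+1)) : List ℝ) : Multiset ℝ) =
        p i ::ₘ (((List.range i).map (M i) : List ℝ) : Multiset ℝ)

def execCost (σ : List ℝ) (p : ℕ → ℝ) : ℝ :=
  ∑ i ∈ Finset.range σ.length, |σ.getD i 0 - p i|

section Proofs

variable {S : Finset ℝ} {f : ℝ → Finset ℝ → ℝ}

lemma useCaps_apply (ms : List ℝ) (c : ℝ → ℕ) (x : ℝ) :
    useCaps c ms x = c x - ms.count x := by
  induction ms generalizing c with
  | nil => simp [useCaps]
  | cons m ms ih =>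
    simp only [useCaps, ih, decCap, List.count_cons]
    rcases eq_or_ne x m with rfl | h
    · simp; omega
    · simp [h, h.symm]

lemma runC_length (c : ℝ → ℕ) (σ : List ℝ) : (runC S f c σ).length = σ.length := by
  induction σ generalizing c with
  | nil => rfl
  | cons r rs ih => simp [runC, ih]

lemma freeAfter_zero (c : ℝ → ℕ) (ms : List ℝ) : freeAfter S c ms 0 = freeOf S c := by
  unfold freeAfter freeOf
  apply Finset.filter_congr
  intro x _
  simp

lemma freeAfter_cons (c : ℝ → ℕ) (m : ℝ) (ms : List ℝ) (t : ℕ) :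
    freeAfter S c (m :: ms) (t+1) = freeAfter S (decCap c m) ms t := by
  unfold freeAfter
  apply Finset.filter_congr
  intro x _
  simp only [List.take_succ_cons, List.count_cons, decCap]
  rcases eq_or_ne x m with rfl | h
  · simp; omega
  · simp [h, h.symm]

lemma runC_cons (c : ℝ → ℕ) (r : ℝ) (rs : List ℝ) :
    runC S f c (r :: rs) = f r (freeOf S c) :: runC S f (decCap c (f r (freeOf S c))) rs := rfl

lemma runC_getD (c : ℝ → ℕ) (σ : List ℝ) (t : ℕ) (ht : t < σ.length) :
    (runC S f c σ).getD t 0 =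
      f (σ.getD t 0) (freeAfter S c (runC S f c σ) t) := by
  induction σ generalizing c t with
  | nil => simp at ht
  | cons r rs ih =>
    cases t with
    | zero => simp [runC_cons, freeAfter_zero]
    | succ t =>
      rw [runC_cons, freeAfter_cons]
      simpa using ih _ t (by simpa using ht)

lemma totalCap_decCap {c : ℝ → ℕ} {m : ℝ} (hm : m ∈ S) (hc : 0 < c m) :
    totalCap S c = totalCap S (decCap c m) + 1 := by
  unfold totalCap
  rw [← Finset.sum_erase_add S c hm, ← Finset.sum_erase_add S (decCap c m) hm]
  have h1 : ∑ x ∈ S.erase m, decCap c m x = ∑ x ∈ S.erase m, c x :=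
    Finset.sum_congr rfl fun x hx => by simp [decCap, Finset.ne_of_mem_erase hx]
  rw [h1]
  simp [decCap]
  omega

lemma freeOf_nonempty {c : ℝ → ℕ} (h : 0 < totalCap S c) : (freeOf S c).Nonempty := by
  by_contra hne
  rw [Finset.not_nonempty_iff_eq_empty] at hne
  have hz : ∀ x ∈ S, c x = 0 := by
    intro x hx
    by_contra hcx
    have : x ∈ freeOf S c := Finset.mem_filter.mpr ⟨hx, Nat.pos_of_ne_zero hcx⟩
    simp [hne] at this
  unfold totalCap at h
  rw [Finset.sum_congr rfl hz] at h
  simp at h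

lemma freeOf_subset (c : ℝ → ℕ) : freeOf S c ⊆ S := Finset.filter_subset _ _

lemma ptcpX_bounds {sa sb : ℝ} (hsa : sa ∈ S) (hsb : sb ∈ S) (hlt : sa < sb) :
    0 < ptcpX S sa sb ∧ ptcpX S sa sb < sb - sa := by
  have h1 : sInf (S : Set ℝ) ≤ sa := csInf_le S.finite_toSet.bddBelow hsa
  have h2 : sb ≤ sSup (S : Set ℝ) := le_csSup S.finite_toSet.bddAbove hsb
  unfold ptcpX
  constructor
  · apply div_pos <;> nlinarith
  · rw [div_lt_iff₀ (by nlinarith)]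
    nlinarith

end Proofs
/-! ### Split data for the PTCP recursion -/

structure SD (S : Finset ℝ) (f f₁ f₂ : ℝ → Finset ℝ → ℝ) (sa sb : ℝ) : Prop where
  hsa : sa ∈ S
  hsb : sb ∈ S
  hlt : sa < sb
  hadj : ∀ x ∈ S, x ≤ sa ∨ sb ≤ x
  hfrm : ∀ (r : ℝ) (F : Finset ℝ), F ⊆ S → F.Nonempty →
        f r F =
          if ¬(F.filter (sb ≤ ·)).Nonempty ∨
             (r ≤ sa + ptcpX S sa sb ∧ (F.filter (· ≤ sa)).Nonempty)
          then f₁ r (F.filter (· ≤ sa))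
          else f₂ r (F.filter (sb ≤ ·))

variable {S : Finset ℝ} {f f₁ f₂ : ℝ → Finset ℝ → ℝ} {sa sb : ℝ}

lemma SD.x_pos (d : SD S f f₁ f₂ sa sb) : 0 < ptcpX S sa sb :=
  (ptcpX_bounds d.hsa d.hsb d.hlt).1

lemma SD.x_lt (d : SD S f f₁ f₂ sa sb) : ptcpX S sa sb < sb - sa :=
  (ptcpX_bounds d.hsa d.hsb d.hlt).2

lemma SD.dichot (d : SD S f f₁ f₂ sa sb) {E : Finset ℝ} (hE : E ⊆ S) {y : ℝ}
    (hy : y ∈ E) : y ≤ sa ∨ sb ≤ y :=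
  d.hadj y (hE hy)

lemma SD.filter1_eq (d : SD S f f₁ f₂ sa sb) {E : Finset ℝ} (hE : E ⊆ S)
    (h2 : ¬(E.filter (sb ≤ ·)).Nonempty) :
    E.filter (· ≤ sa) = E := by
  apply Finset.filter_eq_self.mpr
  intro y hy
  rcases d.dichot hE hy with h | h
  · exact h
  · exact absurd ⟨y, Finset.mem_filter.mpr ⟨hy, h⟩⟩ h2

/-! ### Pointwise properties of PTCP -/

lemma ptcp_mem {S : Finset ℝ} {f : ℝ → Finset ℝ → ℝ} (h : IsPTCP S f) :
    ∀ r F, F ⊆ S → F.Nonempty → f r F ∈ F := by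
  induction h with
  | single s f h =>
    intro r F hF hne
    rw [h r F hF hne]
    obtain ⟨x, hx⟩ := hne
    have hxs : x = s := by have := hF hx; simpa using this
    exact hxs ▸ hx
  | split S f f₁ f₂ sa sb hcard hsa hsb hlt hadj hmax h1 h2 hf ih1 ih2 =>
    intro r F hF hne
    have d : SD S f f₁ f₂ sa sb := ⟨hsa, hsb, hlt, hadj, hf⟩
    rw [hf r F hF hne]
    split_ifs with hrt
    · have hE1 : (F.filter (· ≤ sa)).Nonempty := by
        rcases hrt with h2e | ⟨_, h1ne⟩
        · rw [d.filter1_eq hF h2e]; exact hne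
        · exact h1ne
      exact Finset.filter_subset _ _
        (ih1 r _ (Finset.filter_subset_filter _ hF) hE1)
    · push_neg at hrt
      exact Finset.filter_subset _ _
        (ih2 r _ (Finset.filter_subset_filter _ hF) hrt.1)

/-- Lifting surrounding servers from a filtered free set to the full free set. -/
lemma surr_lift {F : Finset ℝ} {p : ℝ → Prop} [DecidablePred p] {r x : ℝ}
    (hsur : IsSurrounding (F.filter p) r x)
    (hout : ∀ y ∈ F, ¬ p y → (r < y ∧ x ≤ y) ∨ (y < r ∧ y ≤ x))
    (hrF : r ∈ F → p r) : IsSurrounding F r x := by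
  obtain ⟨hxE, hcond⟩ := hsur
  have hxF : x ∈ F := (Finset.mem_filter.mp hxE).1
  refine ⟨hxF, ?_⟩
  by_cases hr : r ∈ F
  · have hrE : r ∈ F.filter p := Finset.mem_filter.mpr ⟨hr, hrF hr⟩
    rw [if_pos hr]
    rw [if_pos hrE] at hcond
    exact hcond
  · rw [if_neg hr]
    have hrE : r ∉ F.filter p := fun hh => hr (Finset.mem_filter.mp hh).1
    rw [if_neg hrE] at hcond
    rcases hcond with ⟨hxr, hy⟩ | ⟨hrx, hy⟩
    · left
      refine ⟨hxr, fun y hyF => ?_⟩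
      by_cases hpy : p y
      · exact hy y (Finset.mem_filter.mpr ⟨hyF, hpy⟩)
      · rcases hout y hyF hpy with ⟨h1, _⟩ | ⟨_, h2⟩
        · exact Or.inr h1
        · exact Or.inl h2
    · right
      refine ⟨hrx, fun y hyF => ?_⟩
      by_cases hpy : p y
      · exact hy y (Finset.mem_filter.mpr ⟨hyF, hpy⟩)
      · rcases hout y hyF hpy with ⟨_, h1⟩ | ⟨h2, _⟩
        · exact Or.inr h1
        · exact Or.inl h2

lemma ptcp_surr {S : Finset ℝ} {f : ℝ → Finset ℝ → ℝ} (h : IsPTCP S f) :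
    ∀ r F, F ⊆ S → F.Nonempty → IsSurrounding F r (f r F) := by
  induction h with
  | single s f h =>
    intro r F hF hne
    obtain ⟨x, hx⟩ := hne
    have hxs : x = s := by have := hF hx; simpa using this
    subst hxs
    rw [h r F hF ⟨x, hx⟩]
    refine ⟨hx, ?_⟩
    by_cases hr : r ∈ F
    · have : r = x := by have := hF hr; simpa using this
      rw [if_pos hr]; exact this.symm
    · rw [if_neg hr]
      have hrx : r ≠ x := fun hh => hr (hh ▸ hx)
      rcases lt_or_gt_of_ne hrx with hlt | hgt
      · right
        refine ⟨hlt, fun y hy => ?_⟩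
        have : y = x := by have := hF hy; simpa using this
        exact Or.inr this.ge
      · left
        refine ⟨hgt, fun y hy => ?_⟩
        have : y = x := by have := hF hy; simpa using this
        exact Or.inl this.le
  | split S f f₁ f₂ sa sb hcard hsa hsb hlt hadj hmax h1 h2 hf ih1 ih2 =>
    intro r F hF hne
    have d : SD S f f₁ f₂ sa sb := ⟨hsa, hsb, hlt, hadj, hf⟩
    rw [hf r F hF hne]
    split_ifs with hrt
    · have hE1 : (F.filter (· ≤ sa)).Nonempty := by
        rcases hrt with h2e | ⟨_, h1ne⟩
        · rw [d.filter1_eq hF h2e]; exact hne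
        · exact h1ne
      have hm : f₁ r (F.filter (· ≤ sa)) ∈ F.filter (· ≤ sa) :=
        ptcp_mem h1 r _ (Finset.filter_subset_filter _ hF) hE1
      have hmsa : f₁ r (F.filter (· ≤ sa)) ≤ sa := (Finset.mem_filter.mp hm).2
      apply surr_lift (ih1 r _ (Finset.filter_subset_filter _ hF) hE1)
      · intro y hyF hpy
        have hsby : sb ≤ y := (d.dichot hF hyF).resolve_left hpy
        left
        constructor
        · rcases hrt with h2e | ⟨hr, _⟩
          · exact absurd ⟨y, Finset.mem_filter.mpr ⟨hyF, hsby⟩⟩ h2e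
          · have := d.x_lt
            linarith
        · linarith
      · intro hrF
        rcases d.dichot hF hrF with h | h
        · exact h
        · rcases hrt with h2e | ⟨hr, _⟩
          · exact absurd ⟨r, Finset.mem_filter.mpr ⟨hrF, h⟩⟩ h2e
          · have := d.x_lt; linarith
    · push_neg at hrt
      obtain ⟨h2ne, himp⟩ := hrt
      have hm : f₂ r (F.filter (sb ≤ ·)) ∈ F.filter (sb ≤ ·) :=
        ptcp_mem h2 r _ (Finset.filter_subset_filter _ hF) h2ne
      have hmsb : sb ≤ f₂ r (F.filter (sb ≤ ·)) := (Finset.mem_filter.mp hm).2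
      apply surr_lift (ih2 r _ (Finset.filter_subset_filter _ hF) h2ne)
      · intro y hyF hpy
        have hysa : y ≤ sa := (d.dichot hF hyF).resolve_right hpy
        right
        constructor
        · have h1ne : (F.filter (· ≤ sa)).Nonempty := ⟨y, Finset.mem_filter.mpr ⟨hyF, hysa⟩⟩
          have hx := d.x_pos
          have := himp
          by_contra hc
          push_neg at hc
          exact (Finset.not_nonempty_iff_eq_empty.mpr (himp (by linarith))) h1ne
        · linarith
      · intro hrF
        rcases d.dichot hF hrF with h | h
        · have h1ne : (F.filter (· ≤ sa)).Nonempty := ⟨r, Finset.mem_filter.mpr ⟨hrF, h⟩⟩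
          have hx := d.x_pos
          exact absurd h1ne (Finset.not_nonempty_iff_eq_empty.mpr (himp (by linarith)))
        · exact h

lemma ptcp_stable {S : Finset ℝ} {f : ℝ → Finset ℝ → ℝ} (h : IsPTCP S f) :
    ∀ r q F, F ⊆ S → F.Nonempty → q ∈ Set.uIcc r (f r F) → f q F = f r F := by
  induction h with
  | single s f h =>
    intro r q F hF hne _
    rw [h r F hF hne, h q F hF hne]
  | split S f f₁ f₂ sa sb hcard hsa hsb hlt hadj hmax h1 h2 hf ih1 ih2 =>
    intro r q F hF hne hq
    have d : SD S f f₁ f₂ sa sb := ⟨hsa, hsb, hlt, hadj, hf⟩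
    rw [hf r F hF hne] at hq ⊢
    rw [hf q F hF hne]
    by_cases hrt : ¬(F.filter (sb ≤ ·)).Nonempty ∨
        (r ≤ sa + ptcpX S sa sb ∧ (F.filter (· ≤ sa)).Nonempty)
    · rw [if_pos hrt] at hq ⊢
      have hE1 : (F.filter (· ≤ sa)).Nonempty := by
        rcases hrt with h2e | ⟨_, h1ne⟩
        · rw [d.filter1_eq hF h2e]; exact hne
        · exact h1ne
      have hm : f₁ r (F.filter (· ≤ sa)) ∈ F.filter (· ≤ sa) :=
        ptcp_mem h1 r _ (Finset.filter_subset_filter _ hF) hE1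
      have hmsa : f₁ r (F.filter (· ≤ sa)) ≤ sa := (Finset.mem_filter.mp hm).2
      have hqc : ¬(F.filter (sb ≤ ·)).Nonempty ∨
          (q ≤ sa + ptcpX S sa sb ∧ (F.filter (· ≤ sa)).Nonempty) := by
        rcases hrt with h2e | ⟨hr, h1ne⟩
        · exact Or.inl h2e
        · right
          refine ⟨?_, h1ne⟩
          have hx := d.x_pos
          rcases Set.mem_uIcc.mp hq with ⟨_, h4⟩ | ⟨_, h4⟩ <;> linarith
      rw [if_pos hqc]
      exact ih1 r q _ (Finset.filter_subset_filter _ hF) hE1 hq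
    · rw [if_neg hrt] at hq ⊢
      push_neg at hrt
      obtain ⟨h2ne, himp⟩ := hrt
      have hm : f₂ r (F.filter (sb ≤ ·)) ∈ F.filter (sb ≤ ·) :=
        ptcp_mem h2 r _ (Finset.filter_subset_filter _ hF) h2ne
      have hmsb : sb ≤ f₂ r (F.filter (sb ≤ ·)) := (Finset.mem_filter.mp hm).2
      have hqc : ¬(¬(F.filter (sb ≤ ·)).Nonempty ∨
          (q ≤ sa + ptcpX S sa sb ∧ (F.filter (· ≤ sa)).Nonempty)) := by
        push_neg
        refine ⟨h2ne, fun hqx => Finset.not_nonempty_iff_eq_empty.mp (fun h1ne => ?_)⟩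
        have hrx : ¬ (r ≤ sa + ptcpX S sa sb) := fun hh => Finset.not_nonempty_iff_eq_empty.mpr (himp hh) h1ne
        push_neg at hrx
        have hxlt := d.x_lt
        rcases Set.mem_uIcc.mp hq with ⟨h3, _⟩ | ⟨h3, _⟩ <;> linarith
      rw [if_neg hqc]
      exact ih2 r q _ (Finset.filter_subset_filter _ hF) h2ne hq

lemma ptcp_self {S : Finset ℝ} {f : ℝ → Finset ℝ → ℝ} (h : IsPTCP S f)
    {r : ℝ} {F : Finset ℝ} (hF : F ⊆ S) (hr : r ∈ F) : f r F = r := by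
  have := ptcp_surr h r F hF ⟨r, hr⟩
  rw [IsSurrounding, if_pos hr] at this
  exact this.2
/-! ### Faithfulness and surrounding-orientation of PTCP -/

lemma runC_eq_of_between {S : Finset ℝ} {f : ℝ → Finset ℝ → ℝ} (h : IsPTCP S f) :
    ∀ (σ τ : List ℝ) (c : ℝ → ℕ), σ.length ≤ totalCap S c → τ.length = σ.length →
    (∀ i < σ.length, τ.getD i 0 ∈ Set.uIcc (σ.getD i 0) ((runC S f c σ).getD i 0)) →
    runC S f c τ = runC S f c σ := by
  intro σ
  induction σ with
  | nil =>
    intro τ c _ hlen _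
    rw [List.length_nil, List.length_eq_zero_iff] at hlen
    rw [hlen]
  | cons r rs ih =>
    intro τ c hval hlen hbet
    cases τ with
    | nil => simp at hlen
    | cons q qs =>
      have hcap : 0 < totalCap S c := lt_of_lt_of_le (by simp) hval
      have hF : (freeOf S c).Nonempty := freeOf_nonempty hcap
      have h0 := hbet 0 (by simp)
      have hq : f q (freeOf S c) = f r (freeOf S c) :=
        ptcp_stable h r q _ (freeOf_subset c) hF (by simpa [runC_cons] using h0)
      rw [runC_cons, runC_cons, hq]
      congr 1
      have hm : f r (freeOf S c) ∈ freeOf S c := ptcp_mem h r _ (freeOf_subset c) hF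
      have hmS : f r (freeOf S c) ∈ S := (Finset.mem_filter.mp hm).1
      have hmc : 0 < c (f r (freeOf S c)) := (Finset.mem_filter.mp hm).2
      apply ih qs (decCap c (f r (freeOf S c)))
      · have := totalCap_decCap hmS hmc
        simp only [List.length_cons] at hval
        omega
      · simpa using hlen
      · intro i hi
        have := hbet (i+1) (by simpa using Nat.succ_lt_succ hi)
        simpa [runC_cons] using this

lemma ptcp_faithful {S : Finset ℝ} {f : ℝ → Finset ℝ → ℝ} (h : IsPTCP S f) :
    FaithfulC S f := by
  intro c σ τ hval hcl i hi
  obtain ⟨hlen, hbet, _⟩ := hcl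
  unfold mtch
  rw [runC_eq_of_between h σ τ c hval hlen fun j hj => hbet j hj]

lemma freeAfter_runC_nonempty {S : Finset ℝ} {f : ℝ → Finset ℝ → ℝ} (h : IsPTCP S f) :
    ∀ (σ : List ℝ) (c : ℝ → ℕ) (i : ℕ), i < σ.length → σ.length ≤ totalCap S c →
    (freeAfter S c (runC S f c σ) i).Nonempty := by
  intro σ
  induction σ with
  | nil => intro c i hi; simp at hi
  | cons r rs ih =>
    intro c i hi hval
    have hcap : 0 < totalCap S c := lt_of_lt_of_le (by simp) hval
    have hF : (freeOf S c).Nonempty := freeOf_nonempty hcap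
    cases i with
    | zero => rw [runC_cons, freeAfter_zero]; exact hF
    | succ i =>
      rw [runC_cons, freeAfter_cons]
      have hm : f r (freeOf S c) ∈ freeOf S c := ptcp_mem h r _ (freeOf_subset c) hF
      have hmS : f r (freeOf S c) ∈ S := (Finset.mem_filter.mp hm).1
      have hmc : 0 < c (f r (freeOf S c)) := (Finset.mem_filter.mp hm).2
      apply ih _ i (by simpa using hi)
      have := totalCap_decCap hmS hmc
      simp only [List.length_cons] at hval
      omega

lemma ptcp_surrOriented {S : Finset ℝ} {f : ℝ → Finset ℝ → ℝ} (h : IsPTCP S f) :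
    SurrOriented S f := by
  intro c σ hval i hi
  unfold mtch
  rw [runC_getD c σ i hi]
  exact ptcp_surr h _ _ (Finset.filter_subset _ _) (freeAfter_runC_nonempty h σ c i hi hval)
/-! ### Facts about `alpha` and the critical-point arithmetic -/

lemma Lval_le_alpha {S T : Finset ℝ} (hT : T ⊆ S) : Lval T ≤ alpha S :=
  Finset.le_max' _ _ (Finset.mem_image_of_mem _ (Finset.mem_powerset.mpr hT))

lemma alpha_nonneg (S : Finset ℝ) : 0 ≤ alpha S := by
  have := Lval_le_alpha (Finset.empty_subset S)
  simpa [Lval] using this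

lemma alpha_mono {S1 S : Finset ℝ} (h : S1 ⊆ S) : alpha S1 ≤ alpha S := by
  apply Finset.max'_le
  intro y hy
  obtain ⟨T, hT, rfl⟩ := Finset.mem_image.mp hy
  exact Lval_le_alpha ((Finset.mem_powerset.mp hT).trans h)

lemma calcC {i1 sa sb sp x r s hf α : ℝ}
    (h1 : i1 ≤ sa) (h2 : sb ≤ sp) (hlt : sa < sb)
    (hx : x = (sb - sa) * ((sp - sb) + (sb - sa)) / ((sa - i1) + (sp - sb) + 2*(sb-sa)))
    (hα1 : (sp - i1)/(sb - sa) ≤ α) (hα2 : 1 ≤ α)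
    (hr : sa + x < r) (hs : s ≤ sa)
    (hhf : sb ≤ hf) (hhf2 : hf ≤ sp) :
    |hf - r| ≤ α * |r - s| := by
  have hD : 0 < sb - sa := by linarith
  have hden : 0 < (sa - i1) + (sp - sb) + 2*(sb-sa) := by linarith
  have hxpos : 0 < x := by
    rw [hx]; apply div_pos (by nlinarith) hden
  have habs : |r - s| = r - s := abs_of_pos (by linarith)
  have hL : (sp - i1)/(sb - sa) * (r - sa) ≥ sp - r := by
    rw [ge_iff_le, div_mul_eq_mul_div, le_div_iff₀ hD]
    have hxd : x * ((sa - i1) + (sp - sb) + 2*(sb-sa)) = (sb - sa) * ((sp - sb) + (sb - sa)) := by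
      rw [hx, div_mul_cancel₀ _ hden.ne']
    nlinarith [hxd, hr]
  rcases le_or_gt hf r with hcase | hcase
  · rw [abs_of_nonpos (by linarith)]
    nlinarith
  · rw [abs_of_pos (by linarith), habs]
    have hLa : 0 ≤ (sp - i1)/(sb - sa) := div_nonneg (by linarith) (le_of_lt hD)
    nlinarith [hL, mul_le_mul_of_nonneg_right hα1 (le_of_lt (show (0:ℝ) < r - sa by linarith)),
      mul_le_mul_of_nonneg_left (show r - sa ≤ r - s by linarith) (le_trans hLa hα1)]

lemma calcD {i1 sa sb sp x r s hf α : ℝ}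
    (h1 : i1 ≤ sa) (h2 : sb ≤ sp) (hlt : sa < sb)
    (hx : x = (sb - sa) * ((sp - sb) + (sb - sa)) / ((sa - i1) + (sp - sb) + 2*(sb-sa)))
    (hα1 : (sp - i1)/(sb - sa) ≤ α) (hα2 : 1 ≤ α)
    (hr : r ≤ sa + x) (hs : sb ≤ s)
    (hhf : i1 ≤ hf) (hhf2 : hf ≤ sa) :
    |hf - r| ≤ α * |r - s| := by
  have hD : 0 < sb - sa := by linarith
  have hden : 0 < (sa - i1) + (sp - sb) + 2*(sb-sa) := by linarith
  have hxlt : x < sb - sa := by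
    rw [hx, div_lt_iff₀ hden]; nlinarith
  have hrs : r < s := by linarith
  have habs : |r - s| = s - r := by rw [abs_of_neg (show r - s < 0 by linarith)]; ring
  have hL : (sp - i1)/(sb - sa) * (sb - r) ≥ r - i1 := by
    rw [ge_iff_le, div_mul_eq_mul_div, le_div_iff₀ hD]
    have hxd : x * ((sa - i1) + (sp - sb) + 2*(sb-sa)) = (sb - sa) * ((sp - sb) + (sb - sa)) := by
      rw [hx, div_mul_cancel₀ _ hden.ne']
    nlinarith [hxd, hr]
  rcases le_or_gt r hf with hcase | hcase
  · rw [abs_of_nonneg (by linarith), habs]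
    nlinarith
  · rw [abs_of_neg (by linarith), habs]
    have hLa : 0 ≤ (sp - i1)/(sb - sa) := div_nonneg (by linarith) (le_of_lt hD)
    nlinarith [hL, mul_le_mul_of_nonneg_right hα1 (le_of_lt (show (0:ℝ) < sb - r by linarith)),
      mul_le_mul_of_nonneg_left (show sb - r ≤ s - r by linarith) (le_trans hLa hα1)]
/-! ### Helper lemmas: which server a PTCP algorithm picks at extremes -/

lemma choose_top {T : Finset ℝ} {g : ℝ → Finset ℝ → ℝ} (h1 : IsPTCP T g)
    {E : Finset ℝ} {q : ℝ} (hE : E ⊆ T) (hne : E.Nonempty)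
    (habove : ∀ y ∈ E, y < q) : ∀ y ∈ E, y ≤ g q E := by
  obtain ⟨hmem, hcond⟩ := ptcp_surr h1 q E hE hne
  have hqE : q ∉ E := fun hq => lt_irrefl q (habove q hq)
  rw [if_neg hqE] at hcond
  rcases hcond with ⟨_, hy⟩ | ⟨hgt, _⟩
  · intro y hyE
    rcases hy y hyE with h | h
    · exact h
    · exact absurd (habove y hyE) (not_lt.mpr h.le)
  · exact absurd (habove _ hmem) (not_lt.mpr hgt.le)

lemma choose_bot {T : Finset ℝ} {g : ℝ → Finset ℝ → ℝ} (h1 : IsPTCP T g)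
    {E : Finset ℝ} {q : ℝ} (hE : E ⊆ T) (hne : E.Nonempty)
    (hbelow : ∀ y ∈ E, q < y) : ∀ y ∈ E, g q E ≤ y := by
  obtain ⟨hmem, hcond⟩ := ptcp_surr h1 q E hE hne
  have hqE : q ∉ E := fun hq => lt_irrefl q (hbelow q hq)
  rw [if_neg hqE] at hcond
  rcases hcond with ⟨hlt, _⟩ | ⟨_, hy⟩
  · exact absurd (hbelow _ hmem) (not_lt.mpr hlt.le)
  · intro y hyE
    rcases hy y hyE with h | h
    · exact absurd (hbelow y hyE) (not_lt.mpr h.le)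
    · exact h

lemma choose_eq_top {T : Finset ℝ} {g : ℝ → Finset ℝ → ℝ} (h1 : IsPTCP T g)
    {E : Finset ℝ} {a q : ℝ} (hET : insert a E ⊆ T)
    (hmax : ∀ y ∈ E, y ≤ a) (habove : ∀ y ∈ insert a E, y < q) :
    g q (insert a E) = a := by
  have hall := choose_top h1 hET (Finset.insert_nonempty a E) habove
  have hu := ptcp_mem h1 q _ hET (Finset.insert_nonempty a E)
  rcases Finset.mem_insert.mp hu with h | h
  · exact h
  · exact le_antisymm (hmax _ h) (hall a (Finset.mem_insert_self a E))

lemma choose_eq_bot {T : Finset ℝ} {g : ℝ → Finset ℝ → ℝ} (h1 : IsPTCP T g)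
    {E : Finset ℝ} {a q : ℝ} (hET : insert a E ⊆ T)
    (hmin : ∀ y ∈ E, a ≤ y) (hbelow : ∀ y ∈ insert a E, q < y) :
    g q (insert a E) = a := by
  have hall := choose_bot h1 hET (Finset.insert_nonempty a E) hbelow
  have hu := ptcp_mem h1 q _ hET (Finset.insert_nonempty a E)
  rcases Finset.mem_insert.mp hu with h | h
  · exact h
  · exact le_antisymm (hall a (Finset.mem_insert_self a E)) (hmin _ h)

lemma choose_max {T : Finset ℝ} {g : ℝ → Finset ℝ → ℝ} (h1 : IsPTCP T g)
    {E : Finset ℝ} {a q : ℝ} (hET : insert a E ⊆ T) (haE : a ∉ E)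
    (hmax : ∀ y ∈ E, y ≤ a) (hne : E.Nonempty)
    (hqa : g q (insert a E) = a) : ∀ y ∈ E, y ≤ g q E := by
  have hE : E ⊆ T := (Finset.subset_insert a E).trans hET
  obtain ⟨_, hconda⟩ := ptcp_surr h1 q (insert a E) hET (Finset.insert_nonempty a E)
  rw [hqa] at hconda
  by_cases hqmem : q ∈ insert a E
  · rw [if_pos hqmem] at hconda
    subst hconda
    apply choose_top h1 hE hne
    intro y hy
    rcases lt_or_eq_of_le (hmax y hy) with h | h
    · exact h
    · exact absurd hy (h ▸ haE)
  · rw [if_neg hqmem] at hconda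
    rcases hconda with ⟨hlt, _⟩ | ⟨_, hy⟩
    · apply choose_top h1 hE hne
      intro y hyE
      exact lt_of_le_of_lt (hmax y hyE) hlt
    · apply choose_top h1 hE hne
      intro y hyE
      rcases hy y (Finset.mem_insert_of_mem hyE) with h | h
      · exact h
      · exact absurd hyE ((le_antisymm (hmax y hyE) h) ▸ haE)

lemma choose_min {T : Finset ℝ} {g : ℝ → Finset ℝ → ℝ} (h1 : IsPTCP T g)
    {E : Finset ℝ} {a q : ℝ} (hET : insert a E ⊆ T) (haE : a ∉ E)
    (hmin : ∀ y ∈ E, a ≤ y) (hne : E.Nonempty)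
    (hqa : g q (insert a E) = a) : ∀ y ∈ E, g q E ≤ y := by
  have hE : E ⊆ T := (Finset.subset_insert a E).trans hET
  obtain ⟨_, hconda⟩ := ptcp_surr h1 q (insert a E) hET (Finset.insert_nonempty a E)
  rw [hqa] at hconda
  by_cases hqmem : q ∈ insert a E
  · rw [if_pos hqmem] at hconda
    subst hconda
    apply choose_bot h1 hE hne
    intro y hy
    rcases lt_or_eq_of_le (hmin y hy) with h | h
    · exact h
    · exact absurd hy (h.symm ▸ haE)
  · rw [if_neg hqmem] at hconda
    rcases hconda with ⟨_, hy⟩ | ⟨hgt, _⟩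
    · apply choose_bot h1 hE hne
      intro y hyE
      rcases hy y (Finset.mem_insert_of_mem hyE) with h | h
      · exact absurd hyE ((le_antisymm h (hmin y hyE)) ▸ haE)
      · exact h
    · apply choose_bot h1 hE hne
      intro y hyE
      exact lt_of_lt_of_le hgt (hmin y hyE)
/-! ### The abstract hybrid chain -/

inductive Reaches (f : ℝ → Finset ℝ → ℝ) : Finset ℝ → ℝ → ℝ → ℝ → Prop
  | merge (G : Finset ℝ) (a h q : ℝ)
      (hu : f q (insert a G) = a) (hv : f q (insert h G) = h) :
      Reaches f G a h h
  | same (G : Finset ℝ) (a h hfin q : ℝ)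
      (hu : f q (insert a G) = f q (insert h G))
      (hmem : f q (insert a G) ∈ G)
      (hnext : Reaches f (G.erase (f q (insert a G))) a h hfin) :
      Reaches f G a h hfin
  | amove (G : Finset ℝ) (a h hfin q : ℝ)
      (hu : f q (insert a G) = a)
      (hv : f q (insert h G) ∈ G)
      (hnext : Reaches f (G.erase (f q (insert h G))) (f q (insert h G)) h hfin) :
      Reaches f G a h hfin
  | hmove (G : Finset ℝ) (a h hfin q : ℝ)
      (hv : f q (insert h G) = h)
      (hu : f q (insert a G) ∈ G)
      (hnext : Reaches f (G.erase (f q (insert a G))) a (f q (insert a G)) hfin) :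
      Reaches f G a h hfin

variable {S : Finset ℝ} {f f₁ f₂ : ℝ → Finset ℝ → ℝ} {sa sb : ℝ}

lemma SD.sub1 (d : SD S f f₁ f₂ sa sb) {G : Finset ℝ} {a : ℝ} (hGS : G ⊆ S)
    (haS : a ∈ S) (hasa : a ≤ sa) :
    insert a (G.filter (· ≤ sa)) ⊆ S.filter (· ≤ sa) :=
  Finset.insert_subset (Finset.mem_filter.mpr ⟨haS, hasa⟩)
    (Finset.filter_subset_filter _ hGS)

lemma SD.sub1' (d : SD S f f₁ f₂ sa sb) {G : Finset ℝ} (hGS : G ⊆ S) :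
    G.filter (· ≤ sa) ⊆ S.filter (· ≤ sa) :=
  Finset.filter_subset_filter _ hGS

lemma SD.sub2 (d : SD S f f₁ f₂ sa sb) {G : Finset ℝ} {a : ℝ} (hGS : G ⊆ S)
    (haS : a ∈ S) (hsba : sb ≤ a) :
    insert a (G.filter (sb ≤ ·)) ⊆ S.filter (sb ≤ ·) :=
  Finset.insert_subset (Finset.mem_filter.mpr ⟨haS, hsba⟩)
    (Finset.filter_subset_filter _ hGS)

lemma SD.sub2' (d : SD S f f₁ f₂ sa sb) {G : Finset ℝ} (hGS : G ⊆ S) :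
    G.filter (sb ≤ ·) ⊆ S.filter (sb ≤ ·) :=
  Finset.filter_subset_filter _ hGS

/-- Evaluation of the split algorithm on a free set `insert a G` with `a` in the
lower part. -/
lemma SD.eval_low (d : SD S f f₁ f₂ sa sb) {G : Finset ℝ} {a : ℝ} (hGS : G ⊆ S)
    (haS : a ∈ S) (hasa : a ≤ sa) (q : ℝ) :
    f q (insert a G) =
      if ¬(G.filter (sb ≤ ·)).Nonempty ∨ q ≤ sa + ptcpX S sa sb
      then f₁ q (insert a (G.filter (· ≤ sa)))
      else f₂ q (G.filter (sb ≤ ·)) := by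
  rw [d.hfrm q _ (Finset.insert_subset haS hGS) (Finset.insert_nonempty a G)]
  rw [Finset.filter_insert, Finset.filter_insert,
    if_pos hasa, if_neg (not_le.mpr (lt_of_le_of_lt hasa d.hlt))]
  apply if_congr _ rfl rfl
  constructor
  · rintro (h | ⟨h, _⟩)
    · exact Or.inl h
    · exact Or.inr h
  · rintro (h | h)
    · exact Or.inl h
    · exact Or.inr ⟨h, Finset.insert_nonempty _ _⟩

/-- Evaluation of the split algorithm on a free set `insert a G` with `a` in the
upper part. -/
lemma SD.eval_high (d : SD S f f₁ f₂ sa sb) {G : Finset ℝ} {a : ℝ} (hGS : G ⊆ S)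
    (haS : a ∈ S) (hsba : sb ≤ a) (q : ℝ) :
    f q (insert a G) =
      if q ≤ sa + ptcpX S sa sb ∧ (G.filter (· ≤ sa)).Nonempty
      then f₁ q (G.filter (· ≤ sa))
      else f₂ q (insert a (G.filter (sb ≤ ·))) := by
  rw [d.hfrm q _ (Finset.insert_subset haS hGS) (Finset.insert_nonempty a G)]
  rw [Finset.filter_insert, Finset.filter_insert,
    if_neg (not_le.mpr (lt_of_lt_of_le d.hlt hsba)), if_pos hsba]
  apply if_congr _ rfl rfl
  constructor
  · rintro (h | h)
    · exact absurd (Finset.insert_nonempty _ _) h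
    · exact h
  · rintro h
    exact Or.inr h
/-! ### Chain invariants: case C (a low / h high) and case D (a high / h low) -/

lemma reaches_C (d : SD S f f₁ f₂ sa sb)
    (h1 : IsPTCP (S.filter (· ≤ sa)) f₁) (h2 : IsPTCP (S.filter (sb ≤ ·)) f₂) :
    ∀ G a h hfin, Reaches f G a h hfin →
      G ⊆ S → a ∉ G → h ∉ G → a ∈ S → h ∈ S → sb ≤ h →
      (sb ≤ a ∨ (a ≤ sa ∧ ∀ y ∈ G, y ≤ sa → y ≤ a)) →
      hfin ∈ S ∧ sb ≤ hfin := by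
  intro G a h hfin hr
  induction hr with
  | merge G a h q hu hv =>
    intro _ _ _ _ hhS hhsb _
    exact ⟨hhS, hhsb⟩
  | same G a h hfin q hu hmem hnext ih =>
    intro hGS haG hhG haS hhS hhsb hmode
    refine ih ((Finset.erase_subset _ _).trans hGS)
      (fun hc => haG (Finset.mem_of_mem_erase hc))
      (fun hc => hhG (Finset.mem_of_mem_erase hc)) haS hhS hhsb ?_
    rcases hmode with h2m | ⟨hasa, hmax⟩
    · exact Or.inl h2m
    · exact Or.inr ⟨hasa, fun y hy hysa => hmax y (Finset.mem_of_mem_erase hy) hysa⟩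
  | amove G a h hfin q hu hv hnext ih =>
    intro hGS haG hhG haS hhS hhsb hmode
    have hvS : f q (insert h G) ∈ S := hGS hv
    have hveq := d.eval_high hGS hhS hhsb q
    rcases hmode with hsba | ⟨hasa, hmaxinv⟩
    · -- mode 2 : both high
      have hueq := d.eval_high hGS haS hsba q
      by_cases hc : q ≤ sa + ptcpX S sa sb ∧ (G.filter (· ≤ sa)).Nonempty
      · rw [if_pos hc] at hueq
        have hmem1 : a ∈ G.filter (· ≤ sa) := by
          rw [← hu, hueq]
          exact ptcp_mem h1 q _ (d.sub1' hGS) hc.2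
        exact absurd (Finset.filter_subset _ _ hmem1) haG
      · rw [if_neg hc] at hveq
        have hv2 : f q (insert h G) ∈ insert h (G.filter (sb ≤ ·)) := by
          rw [hveq]
          exact ptcp_mem h2 q _ (d.sub2 hGS hhS hhsb) (Finset.insert_nonempty _ _)
        have hvsb : sb ≤ f q (insert h G) := by
          rcases Finset.mem_insert.mp hv2 with he | he
          · exact le_of_le_of_eq hhsb he.symm
          · exact (Finset.mem_filter.mp he).2
        exact ih ((Finset.erase_subset _ _).trans hGS) (Finset.notMem_erase _ _)
          (fun hc' => hhG (Finset.mem_of_mem_erase hc')) hvS hhS hhsb (Or.inl hvsb)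
    · -- mode 1 : a low
      have hueq := d.eval_low hGS haS hasa q
      by_cases hcA : ¬(G.filter (sb ≤ ·)).Nonempty ∨ q ≤ sa + ptcpX S sa sb
      · rw [if_pos hcA] at hueq
        have hu1 : f₁ q (insert a (G.filter (· ≤ sa))) = a := by rw [← hueq]; exact hu
        by_cases hcH : q ≤ sa + ptcpX S sa sb ∧ (G.filter (· ≤ sa)).Nonempty
        · rw [if_pos hcH] at hveq
          have hvG1 : f q (insert h G) ∈ G.filter (· ≤ sa) := by
            rw [hveq]
            exact ptcp_mem h1 q _ (d.sub1' hGS) hcH.2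
          have hvsa : f q (insert h G) ≤ sa := (Finset.mem_filter.mp hvG1).2
          have hmax2 := choose_max h1 (d.sub1 hGS haS hasa)
            (fun hc' => haG (Finset.filter_subset _ _ hc'))
            (fun y hy => hmaxinv y (Finset.filter_subset _ _ hy) (Finset.mem_filter.mp hy).2)
            hcH.2 hu1
          refine ih ((Finset.erase_subset _ _).trans hGS) (Finset.notMem_erase _ _)
            (fun hc' => hhG (Finset.mem_of_mem_erase hc')) hvS hhS hhsb ?_
          right
          refine ⟨hvsa, fun y hy hysa => ?_⟩
          have hyG1 : y ∈ G.filter (· ≤ sa) :=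
            Finset.mem_filter.mpr ⟨Finset.mem_of_mem_erase hy, hysa⟩
          have := hmax2 y hyG1
          rwa [hveq]
        · rw [if_neg hcH] at hveq
          have hv2 : f q (insert h G) ∈ insert h (G.filter (sb ≤ ·)) := by
            rw [hveq]
            exact ptcp_mem h2 q _ (d.sub2 hGS hhS hhsb) (Finset.insert_nonempty _ _)
          have hvsb : sb ≤ f q (insert h G) := by
            rcases Finset.mem_insert.mp hv2 with he | he
            · exact le_of_le_of_eq hhsb he.symm
            · exact (Finset.mem_filter.mp he).2
          exact ih ((Finset.erase_subset _ _).trans hGS) (Finset.notMem_erase _ _)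
            (fun hc' => hhG (Finset.mem_of_mem_erase hc')) hvS hhS hhsb (Or.inl hvsb)
      · rw [if_neg hcA] at hueq
        push_neg at hcA
        have hmem2 : a ∈ G.filter (sb ≤ ·) := by
          rw [← hu, hueq]
          exact ptcp_mem h2 q _ (d.sub2' hGS) hcA.1
        exact absurd (Finset.filter_subset _ _ hmem2) haG
  | hmove G a h hfin q hv hu hnext ih =>
    intro hGS haG hhG haS hhS hhsb hmode
    have huS : f q (insert a G) ∈ S := hGS hu
    have hveq := d.eval_high hGS hhS hhsb q
    by_cases hcH : q ≤ sa + ptcpX S sa sb ∧ (G.filter (· ≤ sa)).Nonempty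
    · rw [if_pos hcH] at hveq
      have hmem1 : h ∈ G.filter (· ≤ sa) := by
        rw [← hv, hveq]
        exact ptcp_mem h1 q _ (d.sub1' hGS) hcH.2
      exact absurd (Finset.filter_subset _ _ hmem1) hhG
    · rcases hmode with hsba | ⟨hasa, hmaxinv⟩
      · -- mode 2
        have hueq := d.eval_high hGS haS hsba q
        rw [if_neg hcH] at hueq
        have hu2 : f q (insert a G) ∈ insert a (G.filter (sb ≤ ·)) := by
          rw [hueq]
          exact ptcp_mem h2 q _ (d.sub2 hGS haS hsba) (Finset.insert_nonempty _ _)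
        have husb : sb ≤ f q (insert a G) := by
          rcases Finset.mem_insert.mp hu2 with he | he
          · exact le_of_le_of_eq hsba he.symm
          · exact (Finset.mem_filter.mp he).2
        exact ih ((Finset.erase_subset _ _).trans hGS)
          (fun hc' => haG (Finset.mem_of_mem_erase hc')) (Finset.notMem_erase _ _)
          haS huS husb (Or.inl hsba)
      · -- mode 1
        have hueq := d.eval_low hGS haS hasa q
        by_cases hcA : ¬(G.filter (sb ≤ ·)).Nonempty ∨ q ≤ sa + ptcpX S sa sb
        · exfalso
          rw [if_pos hcA] at hueq
          push_neg at hcH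
          have hXpos := d.x_pos
          have huea : f q (insert a G) = a := by
            rw [hueq]
            by_cases hqX : q ≤ sa + ptcpX S sa sb
            · have hG1e : G.filter (· ≤ sa) = ∅ :=
                (hcH hqX)
              rw [hG1e]
              have hmm := ptcp_mem h1 q (insert a (∅ : Finset ℝ))
                (by rw [← hG1e]; exact d.sub1 hGS haS hasa) (Finset.insert_nonempty _ _)
              simpa using hmm
            · push_neg at hqX
              apply choose_eq_top h1 (d.sub1 hGS haS hasa)
                (fun y hy => hmaxinv y (Finset.filter_subset _ _ hy) (Finset.mem_filter.mp hy).2)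
              intro y hy
              have hysa : y ≤ sa := by
                rcases Finset.mem_insert.mp hy with he | he
                · exact le_of_eq_of_le he hasa
                · exact (Finset.mem_filter.mp he).2
              linarith
          exact haG (huea ▸ hu)
        · rw [if_neg hcA] at hueq
          push_neg at hcA
          have husb : sb ≤ f q (insert a G) := by
            rw [hueq]
            exact (Finset.mem_filter.mp (ptcp_mem h2 q _ (d.sub2' hGS) hcA.1)).2
          refine ih ((Finset.erase_subset _ _).trans hGS)
            (fun hc' => haG (Finset.mem_of_mem_erase hc')) (Finset.notMem_erase _ _)
            haS huS husb ?_
          exact Or.inr ⟨hasa, fun y hy hysa => hmaxinv y (Finset.mem_of_mem_erase hy) hysa⟩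

lemma reaches_D (d : SD S f f₁ f₂ sa sb)
    (h1 : IsPTCP (S.filter (· ≤ sa)) f₁) (h2 : IsPTCP (S.filter (sb ≤ ·)) f₂) :
    ∀ G a h hfin, Reaches f G a h hfin →
      G ⊆ S → a ∉ G → h ∉ G → a ∈ S → h ∈ S → h ≤ sa →
      (a ≤ sa ∨ (sb ≤ a ∧ ∀ y ∈ G, sb ≤ y → a ≤ y)) →
      hfin ∈ S ∧ hfin ≤ sa := by
  intro G a h hfin hr
  induction hr with
  | merge G a h q hu hv =>
    intro _ _ _ _ hhS hhsa _
    exact ⟨hhS, hhsa⟩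
  | same G a h hfin q hu hmem hnext ih =>
    intro hGS haG hhG haS hhS hhsa hmode
    refine ih ((Finset.erase_subset _ _).trans hGS)
      (fun hc => haG (Finset.mem_of_mem_erase hc))
      (fun hc => hhG (Finset.mem_of_mem_erase hc)) haS hhS hhsa ?_
    rcases hmode with h1m | ⟨hsba, hmin⟩
    · exact Or.inl h1m
    · exact Or.inr ⟨hsba, fun y hy hysb => hmin y (Finset.mem_of_mem_erase hy) hysb⟩
  | amove G a h hfin q hu hv hnext ih =>
    intro hGS haG hhG haS hhS hhsa hmode
    have hvS : f q (insert h G) ∈ S := hGS hv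
    have hveq := d.eval_low hGS hhS hhsa q
    rcases hmode with hasa | ⟨hsba, hmininv⟩
    · -- mode 1 : both low
      have hueq := d.eval_low hGS haS hasa q
      by_cases hcA : ¬(G.filter (sb ≤ ·)).Nonempty ∨ q ≤ sa + ptcpX S sa sb
      · rw [if_pos hcA] at hveq
        have hv2 : f q (insert h G) ∈ insert h (G.filter (· ≤ sa)) := by
          rw [hveq]
          exact ptcp_mem h1 q _ (d.sub1 hGS hhS hhsa) (Finset.insert_nonempty _ _)
        have hvsa : f q (insert h G) ≤ sa := by
          rcases Finset.mem_insert.mp hv2 with he | he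
          · exact le_of_eq_of_le he hhsa
          · exact (Finset.mem_filter.mp he).2
        exact ih ((Finset.erase_subset _ _).trans hGS) (Finset.notMem_erase _ _)
          (fun hc' => hhG (Finset.mem_of_mem_erase hc')) hvS hhS hhsa (Or.inl hvsa)
      · rw [if_neg hcA] at hueq
        push_neg at hcA
        have hmem2 : a ∈ G.filter (sb ≤ ·) := by
          rw [← hu, hueq]
          exact ptcp_mem h2 q _ (d.sub2' hGS) hcA.1
        exact absurd (Finset.filter_subset _ _ hmem2) haG
    · -- mode 2 : a high
      have hueq := d.eval_high hGS haS hsba q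
      by_cases hcH : q ≤ sa + ptcpX S sa sb ∧ (G.filter (· ≤ sa)).Nonempty
      · rw [if_pos hcH] at hueq
        have hmem1 : a ∈ G.filter (· ≤ sa) := by
          rw [← hu, hueq]
          exact ptcp_mem h1 q _ (d.sub1' hGS) hcH.2
        exact absurd (Finset.filter_subset _ _ hmem1) haG
      · rw [if_neg hcH] at hueq
        have hu1 : f₂ q (insert a (G.filter (sb ≤ ·))) = a := by rw [← hueq]; exact hu
        by_cases hcA : ¬(G.filter (sb ≤ ·)).Nonempty ∨ q ≤ sa + ptcpX S sa sb
        · rw [if_pos hcA] at hveq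
          have hv2 : f q (insert h G) ∈ insert h (G.filter (· ≤ sa)) := by
            rw [hveq]
            exact ptcp_mem h1 q _ (d.sub1 hGS hhS hhsa) (Finset.insert_nonempty _ _)
          have hvsa : f q (insert h G) ≤ sa := by
            rcases Finset.mem_insert.mp hv2 with he | he
            · exact le_of_eq_of_le he hhsa
            · exact (Finset.mem_filter.mp he).2
          exact ih ((Finset.erase_subset _ _).trans hGS) (Finset.notMem_erase _ _)
            (fun hc' => hhG (Finset.mem_of_mem_erase hc')) hvS hhS hhsa (Or.inl hvsa)
        · rw [if_neg hcA] at hveq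
          push_neg at hcA
          have hvG2 : f q (insert h G) ∈ G.filter (sb ≤ ·) := by
            rw [hveq]
            exact ptcp_mem h2 q _ (d.sub2' hGS) hcA.1
          have hvsb : sb ≤ f q (insert h G) := (Finset.mem_filter.mp hvG2).2
          have hmin2 := choose_min h2 (d.sub2 hGS haS hsba)
            (fun hc' => haG (Finset.filter_subset _ _ hc'))
            (fun y hy => hmininv y (Finset.filter_subset _ _ hy) (Finset.mem_filter.mp hy).2)
            hcA.1 hu1
          refine ih ((Finset.erase_subset _ _).trans hGS) (Finset.notMem_erase _ _)
            (fun hc' => hhG (Finset.mem_of_mem_erase hc')) hvS hhS hhsa ?_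
          right
          refine ⟨hvsb, fun y hy hysb => ?_⟩
          have hyG2 : y ∈ G.filter (sb ≤ ·) :=
            Finset.mem_filter.mpr ⟨Finset.mem_of_mem_erase hy, hysb⟩
          have := hmin2 y hyG2
          rwa [hveq]
  | hmove G a h hfin q hv hu hnext ih =>
    intro hGS haG hhG haS hhS hhsa hmode
    have huS : f q (insert a G) ∈ S := hGS hu
    have hveq := d.eval_low hGS hhS hhsa q
    by_cases hcA : ¬(G.filter (sb ≤ ·)).Nonempty ∨ q ≤ sa + ptcpX S sa sb
    · rw [if_pos hcA] at hveq
      rcases hmode with hasa | ⟨hsba, hmininv⟩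
      · -- mode 1
        have hueq := d.eval_low hGS haS hasa q
        rw [if_pos hcA] at hueq
        have hu2 : f q (insert a G) ∈ insert a (G.filter (· ≤ sa)) := by
          rw [hueq]
          exact ptcp_mem h1 q _ (d.sub1 hGS haS hasa) (Finset.insert_nonempty _ _)
        have husa : f q (insert a G) ≤ sa := by
          rcases Finset.mem_insert.mp hu2 with he | he
          · exact le_of_eq_of_le he hasa
          · exact (Finset.mem_filter.mp he).2
        exact ih ((Finset.erase_subset _ _).trans hGS)
          (fun hc' => haG (Finset.mem_of_mem_erase hc')) (Finset.notMem_erase _ _)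
          haS huS husa (Or.inl hasa)
      · -- mode 2 : a high
        have hueq := d.eval_high hGS haS hsba q
        by_cases hcH : q ≤ sa + ptcpX S sa sb ∧ (G.filter (· ≤ sa)).Nonempty
        · rw [if_pos hcH] at hueq
          have huG1 : f q (insert a G) ∈ G.filter (· ≤ sa) := by
            rw [hueq]
            exact ptcp_mem h1 q _ (d.sub1' hGS) hcH.2
          have husa : f q (insert a G) ≤ sa := (Finset.mem_filter.mp huG1).2
          refine ih ((Finset.erase_subset _ _).trans hGS)
            (fun hc' => haG (Finset.mem_of_mem_erase hc')) (Finset.notMem_erase _ _)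
            haS huS husa ?_
          exact Or.inr ⟨hsba, fun y hy hysb => hmininv y (Finset.mem_of_mem_erase hy) hysb⟩
        · exfalso
          rw [if_neg hcH] at hueq
          have hXlt := d.x_lt
          have huea : f q (insert a G) = a := by
            rw [hueq]
            rcases hcA with hG2e | hqX
            · have hG2e' : G.filter (sb ≤ ·) = ∅ :=
                Finset.not_nonempty_iff_eq_empty.mp hG2e
              rw [hG2e']
              have hmm := ptcp_mem h2 q (insert a (∅ : Finset ℝ))
                (by rw [← hG2e']; exact d.sub2 hGS haS hsba) (Finset.insert_nonempty _ _)
              simpa using hmm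
            · apply choose_eq_bot h2 (d.sub2 hGS haS hsba)
                (fun y hy => hmininv y (Finset.filter_subset _ _ hy) (Finset.mem_filter.mp hy).2)
              intro y hy
              have hysb : sb ≤ y := by
                rcases Finset.mem_insert.mp hy with he | he
                · exact le_of_le_of_eq hsba he.symm
                · exact (Finset.mem_filter.mp he).2
              linarith
          exact haG (huea ▸ hu)
    · rw [if_neg hcA] at hveq
      push_neg at hcA
      have hmem2 : h ∈ G.filter (sb ≤ ·) := by
        rw [← hv, hveq]
        exact ptcp_mem h2 q _ (d.sub2' hGS) hcA.1
      exact absurd (Finset.filter_subset _ _ hmem2) hhG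
/-! ### Projection of chains to the two halves (cases A and B) -/

lemma reaches_proj_low (d : SD S f f₁ f₂ sa sb)
    (h1 : IsPTCP (S.filter (· ≤ sa)) f₁) (h2 : IsPTCP (S.filter (sb ≤ ·)) f₂) :
    ∀ G a h hfin, Reaches f G a h hfin →
      G ⊆ S → a ∉ G → h ∉ G → a ∈ S → h ∈ S → a ≤ sa → h ≤ sa →
      Reaches f₁ (G.filter (· ≤ sa)) a h hfin := by
  intro G a h hfin hr
  induction hr with
  | merge G a h q hu hv =>
    intro hGS haG hhG haS hhS hasa hhsa
    have hueq := d.eval_low hGS haS hasa q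
    have hveq := d.eval_low hGS hhS hhsa q
    by_cases hcA : ¬(G.filter (sb ≤ ·)).Nonempty ∨ q ≤ sa + ptcpX S sa sb
    · rw [if_pos hcA] at hueq hveq
      exact Reaches.merge _ a h q (by rw [← hueq]; exact hu) (by rw [← hveq]; exact hv)
    · rw [if_neg hcA] at hueq
      push_neg at hcA
      exfalso
      have hsba : sb ≤ a := by
        rw [← hu, hueq]
        exact (Finset.mem_filter.mp (ptcp_mem h2 q _ (d.sub2' hGS) hcA.1)).2
      have := d.hlt; linarith
  | same G a h hfin q hu hmem hnext ih =>
    intro hGS haG hhG haS hhS hasa hhsa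
    have hueq := d.eval_low hGS haS hasa q
    have hveq := d.eval_low hGS hhS hhsa q
    have hG'S : G.erase (f q (insert a G)) ⊆ S := (Finset.erase_subset _ _).trans hGS
    have hrec := ih hG'S (fun hc => haG (Finset.mem_of_mem_erase hc))
      (fun hc => hhG (Finset.mem_of_mem_erase hc)) haS hhS hasa hhsa
    have hfe : (G.erase (f q (insert a G))).filter (· ≤ sa)
        = (G.filter (· ≤ sa)).erase (f q (insert a G)) := Finset.filter_erase _ _ _
    rw [hfe] at hrec
    by_cases hcA : ¬(G.filter (sb ≤ ·)).Nonempty ∨ q ≤ sa + ptcpX S sa sb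
    · rw [if_pos hcA] at hueq hveq
      have humem : f q (insert a G) ∈ insert a (G.filter (· ≤ sa)) := by
        rw [hueq]
        exact ptcp_mem h1 q _ (d.sub1 hGS haS hasa) (Finset.insert_nonempty _ _)
      have husa : f q (insert a G) ≤ sa := by
        rcases Finset.mem_insert.mp humem with he | he
        · exact le_of_eq_of_le he hasa
        · exact (Finset.mem_filter.mp he).2
      have huG1 : f q (insert a G) ∈ G.filter (· ≤ sa) := Finset.mem_filter.mpr ⟨hmem, husa⟩
      refine Reaches.same _ a h hfin q (by rw [← hueq, ← hveq]; exact hu) ?_ ?_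
      · rw [← hueq]; exact huG1
      · rw [← hueq]; exact hrec
    · rw [if_neg hcA] at hueq
      push_neg at hcA
      have husb : sb ≤ f q (insert a G) := by
        rw [hueq]
        exact (Finset.mem_filter.mp (ptcp_mem h2 q _ (d.sub2' hGS) hcA.1)).2
      rwa [Finset.erase_eq_of_notMem (s := G.filter (· ≤ sa)) (a := f q (insert a G)) (fun hc =>
        absurd (Finset.mem_filter.mp hc).2 (not_le.mpr (lt_of_lt_of_le d.hlt husb)))] at hrec
  | amove G a h hfin q hu hv hnext ih =>
    intro hGS haG hhG haS hhS hasa hhsa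
    have hueq := d.eval_low hGS haS hasa q
    have hveq := d.eval_low hGS hhS hhsa q
    by_cases hcA : ¬(G.filter (sb ≤ ·)).Nonempty ∨ q ≤ sa + ptcpX S sa sb
    · rw [if_pos hcA] at hueq hveq
      have hvmem : f q (insert h G) ∈ insert h (G.filter (· ≤ sa)) := by
        rw [hveq]
        exact ptcp_mem h1 q _ (d.sub1 hGS hhS hhsa) (Finset.insert_nonempty _ _)
      have hvsa : f q (insert h G) ≤ sa := by
        rcases Finset.mem_insert.mp hvmem with he | he
        · exact le_of_eq_of_le he hhsa
        · exact (Finset.mem_filter.mp he).2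
      have hvG1 : f q (insert h G) ∈ G.filter (· ≤ sa) := Finset.mem_filter.mpr ⟨hv, hvsa⟩
      have hrec := ih ((Finset.erase_subset _ _).trans hGS) (Finset.notMem_erase _ _)
        (fun hc => hhG (Finset.mem_of_mem_erase hc)) (hGS hv) hhS hvsa hhsa
      have hfe : (G.erase (f q (insert h G))).filter (· ≤ sa)
          = (G.filter (· ≤ sa)).erase (f q (insert h G)) := Finset.filter_erase _ _ _
      rw [hfe] at hrec
      refine Reaches.amove _ a h hfin q (by rw [← hueq]; exact hu) ?_ ?_
      · rw [← hveq]; exact hvG1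
      · rw [← hveq]; exact hrec
    · rw [if_neg hcA] at hueq
      push_neg at hcA
      exfalso
      have hsba : sb ≤ a := by
        rw [← hu, hueq]
        exact (Finset.mem_filter.mp (ptcp_mem h2 q _ (d.sub2' hGS) hcA.1)).2
      have := d.hlt; linarith
  | hmove G a h hfin q hv hu hnext ih =>
    intro hGS haG hhG haS hhS hasa hhsa
    have hueq := d.eval_low hGS haS hasa q
    have hveq := d.eval_low hGS hhS hhsa q
    by_cases hcA : ¬(G.filter (sb ≤ ·)).Nonempty ∨ q ≤ sa + ptcpX S sa sb
    · rw [if_pos hcA] at hueq hveq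
      have humem : f q (insert a G) ∈ insert a (G.filter (· ≤ sa)) := by
        rw [hueq]
        exact ptcp_mem h1 q _ (d.sub1 hGS haS hasa) (Finset.insert_nonempty _ _)
      have husa : f q (insert a G) ≤ sa := by
        rcases Finset.mem_insert.mp humem with he | he
        · exact le_of_eq_of_le he hasa
        · exact (Finset.mem_filter.mp he).2
      have huG1 : f q (insert a G) ∈ G.filter (· ≤ sa) := Finset.mem_filter.mpr ⟨hu, husa⟩
      have hrec := ih ((Finset.erase_subset _ _).trans hGS)
        (fun hc => haG (Finset.mem_of_mem_erase hc)) (Finset.notMem_erase _ _)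
        haS (hGS hu) hasa husa
      have hfe : (G.erase (f q (insert a G))).filter (· ≤ sa)
          = (G.filter (· ≤ sa)).erase (f q (insert a G)) := Finset.filter_erase _ _ _
      rw [hfe] at hrec
      refine Reaches.hmove _ a h hfin q (by rw [← hveq]; exact hv) ?_ ?_
      · rw [← hueq]; exact huG1
      · rw [← hueq]; exact hrec
    · rw [if_neg hcA] at hveq
      push_neg at hcA
      exfalso
      have hsbh : sb ≤ h := by
        rw [← hv, hveq]
        exact (Finset.mem_filter.mp (ptcp_mem h2 q _ (d.sub2' hGS) hcA.1)).2
      have := d.hlt; linarith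

lemma reaches_proj_high (d : SD S f f₁ f₂ sa sb)
    (h1 : IsPTCP (S.filter (· ≤ sa)) f₁) (h2 : IsPTCP (S.filter (sb ≤ ·)) f₂) :
    ∀ G a h hfin, Reaches f G a h hfin →
      G ⊆ S → a ∉ G → h ∉ G → a ∈ S → h ∈ S → sb ≤ a → sb ≤ h →
      Reaches f₂ (G.filter (sb ≤ ·)) a h hfin := by
  intro G a h hfin hr
  induction hr with
  | merge G a h q hu hv =>
    intro hGS haG hhG haS hhS hsba hsbh
    have hueq := d.eval_high hGS haS hsba q
    have hveq := d.eval_high hGS hhS hsbh q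
    by_cases hcH : q ≤ sa + ptcpX S sa sb ∧ (G.filter (· ≤ sa)).Nonempty
    · rw [if_pos hcH] at hueq
      exfalso
      have hasa : a ≤ sa := by
        rw [← hu, hueq]
        exact (Finset.mem_filter.mp (ptcp_mem h1 q _ (d.sub1' hGS) hcH.2)).2
      have := d.hlt; linarith
    · rw [if_neg hcH] at hueq hveq
      exact Reaches.merge _ a h q (by rw [← hueq]; exact hu) (by rw [← hveq]; exact hv)
  | same G a h hfin q hu hmem hnext ih =>
    intro hGS haG hhG haS hhS hsba hsbh
    have hueq := d.eval_high hGS haS hsba q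
    have hveq := d.eval_high hGS hhS hsbh q
    have hG'S : G.erase (f q (insert a G)) ⊆ S := (Finset.erase_subset _ _).trans hGS
    have hrec := ih hG'S (fun hc => haG (Finset.mem_of_mem_erase hc))
      (fun hc => hhG (Finset.mem_of_mem_erase hc)) haS hhS hsba hsbh
    have hfe : (G.erase (f q (insert a G))).filter (sb ≤ ·)
        = (G.filter (sb ≤ ·)).erase (f q (insert a G)) := Finset.filter_erase _ _ _
    rw [hfe] at hrec
    by_cases hcH : q ≤ sa + ptcpX S sa sb ∧ (G.filter (· ≤ sa)).Nonempty
    · rw [if_pos hcH] at hueq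
      have husa : f q (insert a G) ≤ sa := by
        rw [hueq]
        exact (Finset.mem_filter.mp (ptcp_mem h1 q _ (d.sub1' hGS) hcH.2)).2
      rwa [Finset.erase_eq_of_notMem (s := G.filter (sb ≤ ·)) (a := f q (insert a G)) (fun hc =>
        absurd husa (not_le.mpr (lt_of_lt_of_le d.hlt (Finset.mem_filter.mp hc).2)))] at hrec
    · rw [if_neg hcH] at hueq hveq
      have humem : f q (insert a G) ∈ insert a (G.filter (sb ≤ ·)) := by
        rw [hueq]
        exact ptcp_mem h2 q _ (d.sub2 hGS haS hsba) (Finset.insert_nonempty _ _)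
      have husb : sb ≤ f q (insert a G) := by
        rcases Finset.mem_insert.mp humem with he | he
        · exact le_of_le_of_eq hsba he.symm
        · exact (Finset.mem_filter.mp he).2
      have huG2 : f q (insert a G) ∈ G.filter (sb ≤ ·) := Finset.mem_filter.mpr ⟨hmem, husb⟩
      refine Reaches.same _ a h hfin q (by rw [← hueq, ← hveq]; exact hu) ?_ ?_
      · rw [← hueq]; exact huG2
      · rw [← hueq]; exact hrec
  | amove G a h hfin q hu hv hnext ih =>
    intro hGS haG hhG haS hhS hsba hsbh
    have hueq := d.eval_high hGS haS hsba q
    have hveq := d.eval_high hGS hhS hsbh q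
    by_cases hcH : q ≤ sa + ptcpX S sa sb ∧ (G.filter (· ≤ sa)).Nonempty
    · rw [if_pos hcH] at hueq
      exfalso
      have hasa : a ≤ sa := by
        rw [← hu, hueq]
        exact (Finset.mem_filter.mp (ptcp_mem h1 q _ (d.sub1' hGS) hcH.2)).2
      have := d.hlt; linarith
    · rw [if_neg hcH] at hueq hveq
      have hvmem : f q (insert h G) ∈ insert h (G.filter (sb ≤ ·)) := by
        rw [hveq]
        exact ptcp_mem h2 q _ (d.sub2 hGS hhS hsbh) (Finset.insert_nonempty _ _)
      have hvsb : sb ≤ f q (insert h G) := by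
        rcases Finset.mem_insert.mp hvmem with he | he
        · exact le_of_le_of_eq hsbh he.symm
        · exact (Finset.mem_filter.mp he).2
      have hvG2 : f q (insert h G) ∈ G.filter (sb ≤ ·) := Finset.mem_filter.mpr ⟨hv, hvsb⟩
      have hrec := ih ((Finset.erase_subset _ _).trans hGS) (Finset.notMem_erase _ _)
        (fun hc => hhG (Finset.mem_of_mem_erase hc)) (hGS hv) hhS hvsb hsbh
      have hfe : (G.erase (f q (insert h G))).filter (sb ≤ ·)
          = (G.filter (sb ≤ ·)).erase (f q (insert h G)) := Finset.filter_erase _ _ _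
      rw [hfe] at hrec
      refine Reaches.amove _ a h hfin q (by rw [← hueq]; exact hu) ?_ ?_
      · rw [← hveq]; exact hvG2
      · rw [← hveq]; exact hrec
  | hmove G a h hfin q hv hu hnext ih =>
    intro hGS haG hhG haS hhS hsba hsbh
    have hueq := d.eval_high hGS haS hsba q
    have hveq := d.eval_high hGS hhS hsbh q
    by_cases hcH : q ≤ sa + ptcpX S sa sb ∧ (G.filter (· ≤ sa)).Nonempty
    · rw [if_pos hcH] at hveq
      exfalso
      have hhsa : h ≤ sa := by
        rw [← hv, hveq]
        exact (Finset.mem_filter.mp (ptcp_mem h1 q _ (d.sub1' hGS) hcH.2)).2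
      have := d.hlt; linarith
    · rw [if_neg hcH] at hueq hveq
      have humem : f q (insert a G) ∈ insert a (G.filter (sb ≤ ·)) := by
        rw [hueq]
        exact ptcp_mem h2 q _ (d.sub2 hGS haS hsba) (Finset.insert_nonempty _ _)
      have husb : sb ≤ f q (insert a G) := by
        rcases Finset.mem_insert.mp humem with he | he
        · exact le_of_le_of_eq hsba he.symm
        · exact (Finset.mem_filter.mp he).2
      have huG2 : f q (insert a G) ∈ G.filter (sb ≤ ·) := Finset.mem_filter.mpr ⟨hu, husb⟩
      have hrec := ih ((Finset.erase_subset _ _).trans hGS)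
        (fun hc => haG (Finset.mem_of_mem_erase hc)) (Finset.notMem_erase _ _)
        haS (hGS hu) hsba husb
      have hfe : (G.erase (f q (insert a G))).filter (sb ≤ ·)
          = (G.filter (sb ≤ ·)).erase (f q (insert a G)) := Finset.filter_erase _ _ _
      rw [hfe] at hrec
      refine Reaches.hmove _ a h hfin q (by rw [← hveq]; exact hv) ?_ ?_
      · rw [← hueq]; exact huG2
      · rw [← hueq]; exact hrec
/-! ### The key hybrid bound for PTCP -/

lemma ptcp_key {S : Finset ℝ} {f : ℝ → Finset ℝ → ℝ} (hp : IsPTCP S f) :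
    ∀ F r s hfin, F ⊆ S → s ∈ F → s ≠ f r F → NoFreeBetween F s (f r F) →
      Reaches f ((F.erase s).erase (f r F)) s (f r F) hfin →
      |hfin - r| ≤ alpha S * |r - s| := by
  induction hp with
  | single s0 f h =>
    intro F r s hfin hF hs hne _ _
    exfalso
    have hs0 : s = s0 := by have := hF hs; simpa using this
    exact hne (by rw [h r F hF ⟨s, hs⟩, hs0])
  | split S f f₁ f₂ sa sb hcard hsa hsb hlt hadj hmax h1 h2 hf ih1 ih2 =>
    intro F r s hfin hF hs hne hnfb hreach
    have d : SD S f f₁ f₂ sa sb := ⟨hsa, hsb, hlt, hadj, hf⟩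
    have hFne : F.Nonempty := ⟨s, hs⟩
    have hptcp : IsPTCP S f := IsPTCP.split S f f₁ f₂ sa sb hcard hsa hsb hlt hadj hmax h1 h2 hf
    have hmF : f r F ∈ F := ptcp_mem hptcp r F hF hFne
    have hG0S : (F.erase s).erase (f r F) ⊆ S :=
      (Finset.erase_subset _ _).trans ((Finset.erase_subset _ _).trans hF)
    have hsG0 : s ∉ (F.erase s).erase (f r F) :=
      fun hc => Finset.notMem_erase s F (Finset.mem_of_mem_erase hc)
    have hmG0 : f r F ∉ (F.erase s).erase (f r F) := Finset.notMem_erase _ _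
    have hsS : s ∈ S := hF hs
    have hmS : f r F ∈ S := hF hmF
    have hInf : sInf (S : Set ℝ) ≤ sa := csInf_le S.finite_toSet.bddBelow hsa
    have hSup : sb ≤ sSup (S : Set ℝ) := le_csSup S.finite_toSet.bddAbove hsb
    have hLval : Lval S = (sSup (S : Set ℝ) - sInf (S : Set ℝ)) / (sb - sa) := by
      rw [Lval, if_pos hcard, ← hmax]
    have hα1 : (sSup (S : Set ℝ) - sInf (S : Set ℝ)) / (sb - sa) ≤ alpha S := by
      rw [← hLval]; exact Lval_le_alpha (Finset.Subset.refl S)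
    have hα2 : 1 ≤ alpha S := by
      refine le_trans ?_ hα1
      rw [one_le_div (by linarith : (0:ℝ) < sb - sa)]
      linarith
    have heval := hf r F hF hFne
    by_cases hP : ¬(F.filter (sb ≤ ·)).Nonempty ∨
        (r ≤ sa + ptcpX S sa sb ∧ (F.filter (· ≤ sa)).Nonempty)
    · rw [if_pos hP] at heval
      have hF1ne : (F.filter (· ≤ sa)).Nonempty := by
        rcases hP with h2e | ⟨_, h1ne⟩
        · rw [d.filter1_eq hF h2e]; exact hFne
        · exact h1ne
      have hm1 : f r F ∈ F.filter (· ≤ sa) := by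
        rw [heval]; exact ptcp_mem h1 r _ (d.sub1' hF) hF1ne
      have hmlow : f r F ≤ sa := (Finset.mem_filter.mp hm1).2
      rcases hadj s hsS with hssa | hssb
      · -- Case A : both low
        have hproj := reaches_proj_low d h1 h2 _ _ _ _ hreach hG0S hsG0 hmG0 hsS hmS hssa hmlow
        have hGf : ((F.erase s).erase (f r F)).filter (· ≤ sa)
            = ((F.filter (· ≤ sa)).erase s).erase (f r F) := by
          rw [Finset.filter_erase _ _ _, Finset.filter_erase _ _ _]
        rw [hGf] at hproj
        have hnfb1 : NoFreeBetween (F.filter (· ≤ sa)) s (f₁ r (F.filter (· ≤ sa))) := by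
          rw [← heval]
          exact fun y hy => hnfb y (Finset.filter_subset _ _ hy)
        have hb := ih1 (F.filter (· ≤ sa)) r s hfin (d.sub1' hF)
          (Finset.mem_filter.mpr ⟨hs, hssa⟩) (by rw [← heval]; exact hne) hnfb1
          (by rw [← heval]; exact hproj)
        refine le_trans hb (mul_le_mul_of_nonneg_right ?_ (abs_nonneg _))
        exact alpha_mono (Finset.filter_subset _ _)
      · -- Case D : s high, chosen server low
        have hms : f r F < s := by have := d.hlt; linarith
        have hmin : ∀ y ∈ (F.erase s).erase (f r F), sb ≤ y → s ≤ y := by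
          intro y hy hysb
          by_contra hc
          push_neg at hc
          refine hnfb y (Finset.mem_of_mem_erase (Finset.mem_of_mem_erase hy)) ⟨?_, ?_⟩
          · rw [min_eq_right hms.le]
            have := d.hlt; linarith
          · rw [max_eq_left hms.le]
            exact hc
        obtain ⟨hfinS, hfinsa⟩ := reaches_D d h1 h2 _ _ _ _ hreach hG0S hsG0 hmG0 hsS hmS hmlow
          (Or.inr ⟨hssb, hmin⟩)
        have hrX : r ≤ sa + ptcpX S sa sb := by
          rcases hP with h2e | hP2
          · exact absurd ⟨s, Finset.mem_filter.mpr ⟨hs, hssb⟩⟩ h2e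
          · exact hP2.1
        exact calcD hInf hSup hlt rfl hα1 hα2 hrX hssb
          (csInf_le S.finite_toSet.bddBelow hfinS) hfinsa
    · rw [if_neg hP] at heval
      push_neg at hP
      obtain ⟨hF2ne, himp⟩ := hP
      have hm2 : f r F ∈ F.filter (sb ≤ ·) := by
        rw [heval]; exact ptcp_mem h2 r _ (d.sub2' hF) hF2ne
      have hmhigh : sb ≤ f r F := (Finset.mem_filter.mp hm2).2
      rcases hadj s hsS with hssa | hssb
      · -- Case C : s low, chosen server high
        have hsm : s < f r F := by have := d.hlt; linarith
        have hmaxinv : ∀ y ∈ (F.erase s).erase (f r F), y ≤ sa → y ≤ s := by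
          intro y hy hysa
          by_contra hc
          push_neg at hc
          refine hnfb y (Finset.mem_of_mem_erase (Finset.mem_of_mem_erase hy)) ⟨?_, ?_⟩
          · rw [min_eq_left hsm.le]
            exact hc
          · rw [max_eq_right hsm.le]
            have := d.hlt; linarith
        obtain ⟨hfinS, hfinsb⟩ := reaches_C d h1 h2 _ _ _ _ hreach hG0S hsG0 hmG0 hsS hmS hmhigh
          (Or.inr ⟨hssa, hmaxinv⟩)
        have hrX : sa + ptcpX S sa sb < r := by
          by_contra hc
          push_neg at hc
          exact Finset.not_nonempty_iff_eq_empty.mpr (himp hc) ⟨s, Finset.mem_filter.mpr ⟨hs, hssa⟩⟩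
        exact calcC hInf hSup hlt rfl hα1 hα2 hrX hssa hfinsb
          (le_csSup S.finite_toSet.bddAbove hfinS)
      · -- Case B : both high
        have hproj := reaches_proj_high d h1 h2 _ _ _ _ hreach hG0S hsG0 hmG0 hsS hmS hssb hmhigh
        have hGf : ((F.erase s).erase (f r F)).filter (sb ≤ ·)
            = ((F.filter (sb ≤ ·)).erase s).erase (f r F) := by
          rw [Finset.filter_erase _ _ _, Finset.filter_erase _ _ _]
        rw [hGf] at hproj
        have hnfb2 : NoFreeBetween (F.filter (sb ≤ ·)) s (f₂ r (F.filter (sb ≤ ·))) := by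
          rw [← heval]
          exact fun y hy => hnfb y (Finset.filter_subset _ _ hy)
        have hb := ih2 (F.filter (sb ≤ ·)) r s hfin (d.sub2' hF)
          (Finset.mem_filter.mpr ⟨hs, hssb⟩) (by rw [← heval]; exact hne) hnfb2
          (by rw [← heval]; exact hproj)
        refine le_trans hb (mul_le_mul_of_nonneg_right ?_ (abs_nonneg _))
        exact alpha_mono (Finset.filter_subset _ _)
/-! ### Plumbing for runs and hybrid runs with unit capacities -/

lemma finset_erase_comm (s : Finset ℝ) (x y : ℝ) :
    (s.erase x).erase y = (s.erase y).erase x := by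
  ext z
  simp only [Finset.mem_erase]
  tauto

lemma useCaps_append (c : ℝ → ℕ) (l1 l2 : List ℝ) :
    useCaps c (l1 ++ l2) = useCaps (useCaps c l1) l2 := by
  induction l1 generalizing c with
  | nil => rfl
  | cons m ms ih =>
    show useCaps (decCap c m) (ms ++ l2) = useCaps (useCaps (decCap c m) ms) l2
    exact ih _

lemma freeAfter_append (c : ℝ → ℕ) (L1 L2 : List ℝ) (t : ℕ) :
    freeAfter S c (L1 ++ L2) (L1.length + t) = freeAfter S (useCaps c L1) L2 t := by
  unfold freeAfter
  apply Finset.filter_congr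
  intro x _
  rw [List.take_length_add_append, List.count_append, useCaps_apply]
  constructor <;> intro <;> omega

lemma freeAfter_eq_freeOf (c : ℝ → ℕ) (ms : List ℝ) (t : ℕ) :
    freeAfter S c ms t = freeOf S (useCaps c (ms.take t)) := by
  unfold freeAfter freeOf
  apply Finset.filter_congr
  intro x _
  rw [useCaps_apply]
  constructor <;> intro <;> omega

lemma freeOf_decCap (cc : ℝ → ℕ) (s : ℝ) (hcc : cc s ≤ 1) :
    freeOf S (decCap cc s) = (freeOf S cc).erase s := by
  ext x
  rw [freeOf, freeOf, Finset.mem_erase, Finset.mem_filter, Finset.mem_filter]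
  simp only [decCap]
  rcases eq_or_ne x s with rfl | hxs
  · constructor
    · rintro ⟨hxS, hpos⟩
      rw [if_pos rfl] at hpos
      omega
    · rintro ⟨hne, _⟩
      exact absurd rfl hne
  · simp [hxs]

lemma freeAfter_succ_unit (ms : List ℝ) (t : ℕ) (ht : t < ms.length) :
    freeAfter S c1 ms (t+1) = (freeAfter S c1 ms t).erase (ms.getD t 0) := by
  have hx : ms[t]? = some (ms.getD t 0) := by
    rw [List.getD_eq_getElem?_getD, List.getElem?_eq_getElem ht]
    rfl
  ext x
  simp only [freeAfter, Finset.mem_erase, Finset.mem_filter, c1]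
  rw [List.take_succ, hx]
  simp only [Option.toList_some, List.count_append, List.count_singleton]
  rcases eq_or_ne x (ms.getD t 0) with rfl | hxm
  · simp
  · simp [hxm, Ne.symm hxm]
    tauto

lemma runA_step {f : ℝ → Finset ℝ → ℝ} (σ : List ℝ) (t : ℕ) (ht : t < σ.length) :
    freeAfter S c1 (runC S f c1 σ) (t+1)
      = (freeAfter S c1 (runC S f c1 σ) t).erase
          (f (σ.getD t 0) (freeAfter S c1 (runC S f c1 σ) t)) := by
  rw [freeAfter_succ_unit _ t (by rw [runC_length]; exact ht), runC_getD c1 σ t ht]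

lemma runC_take {f : ℝ → Finset ℝ → ℝ} :
    ∀ (σ : List ℝ) (c : ℝ → ℕ) (n : ℕ),
      (runC S f c σ).take n = runC S f c (σ.take n) := by
  intro σ
  induction σ with
  | nil => intro c n; simp [runC]
  | cons r rs ih =>
    intro c n
    cases n with
    | zero => simp [runC]
    | succ n => simp [runC_cons, List.take_succ_cons, ih]

section Hybrid

variable {f : ℝ → Finset ℝ → ℝ} {σ : List ℝ} {i : ℕ} {s : ℝ}

lemma hybrid_len (h1i : 1 ≤ i) (hik : i ≤ σ.length) :
    (hybridRun S f c1 σ i s).length = σ.length := by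
  unfold hybridRun
  simp only [List.length_append, List.length_cons, runC_length, List.length_take,
    List.length_drop]
  omega

lemma hybrid_decomp :
    hybridRun S f c1 σ i s =
      (runC S f c1 (σ.take (i-1)) ++ [s]) ++
        runC S f (decCap (useCaps c1 (runC S f c1 (σ.take (i-1)))) s) (σ.drop i) := by
  unfold hybridRun
  rw [List.append_assoc, List.singleton_append]

lemma hybrid_freeAfter (h1i : 1 ≤ i) (hik : i ≤ σ.length) {t : ℕ} (hti : i ≤ t) :
    freeAfter S c1 (hybridRun S f c1 σ i s) t
      = freeAfter S (decCap (useCaps c1 (runC S f c1 (σ.take (i-1)))) s)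
          (runC S f (decCap (useCaps c1 (runC S f c1 (σ.take (i-1)))) s) (σ.drop i)) (t - i) := by
  have hlen1 : (runC S f c1 (σ.take (i-1)) ++ [s]).length = i := by
    simp only [List.length_append, List.length_cons, List.length_nil, runC_length,
      List.length_take]
    omega
  have hidx : freeAfter S c1 ((runC S f c1 (σ.take (i-1)) ++ [s])
        ++ runC S f (decCap (useCaps c1 (runC S f c1 (σ.take (i-1)))) s) (σ.drop i)) t
      = freeAfter S c1 ((runC S f c1 (σ.take (i-1)) ++ [s])
        ++ runC S f (decCap (useCaps c1 (runC S f c1 (σ.take (i-1)))) s) (σ.drop i))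
        ((runC S f c1 (σ.take (i-1)) ++ [s]).length + (t - i)) :=
    congrArg _ (by rw [hlen1]; omega)
  rw [hybrid_decomp, hidx, freeAfter_append, useCaps_append]
  rfl

lemma hybrid_getD (h1i : 1 ≤ i) (hik : i ≤ σ.length) {t : ℕ} (hti : i ≤ t)
    (htlen : t < σ.length) :
    (hybridRun S f c1 σ i s).getD t 0
      = f (σ.getD t 0) (freeAfter S c1 (hybridRun S f c1 σ i s) t) := by
  have hlen1 : (runC S f c1 (σ.take (i-1)) ++ [s]).length = i := by
    simp only [List.length_append, List.length_cons, List.length_nil, runC_length,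
      List.length_take]
    omega
  have hdroplen : t - i < (σ.drop i).length := by
    rw [List.length_drop]; omega
  have hgd : (σ.drop i).getD (t - i) 0 = σ.getD t 0 := by
    rw [List.getD_eq_getElem?_getD, List.getD_eq_getElem?_getD, List.getElem?_drop,
      show i + (t - i) = t by omega]
  rw [hybrid_decomp, List.getD_append_right _ _ _ _ (by omega : (runC S f c1 (σ.take (i-1)) ++ [s]).length ≤ t),
    hlen1, runC_getD _ _ (t - i) hdroplen, hgd, ← hybrid_decomp, hybrid_freeAfter h1i hik hti]

lemma hybrid_step (h1i : 1 ≤ i) (hik : i ≤ σ.length) {t : ℕ} (hti : i ≤ t)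
    (htlen : t < σ.length) :
    freeAfter S c1 (hybridRun S f c1 σ i s) (t+1)
      = (freeAfter S c1 (hybridRun S f c1 σ i s) t).erase
          (f (σ.getD t 0) (freeAfter S c1 (hybridRun S f c1 σ i s) t)) := by
  rw [freeAfter_succ_unit _ t (by rw [hybrid_len h1i hik]; exact htlen),
    hybrid_getD h1i hik hti htlen]

lemma hybrid_freeAfter_start (h1i : 1 ≤ i) (hik : i ≤ σ.length) :
    freeAfter S c1 (hybridRun S f c1 σ i s) i
      = (freeAfter S c1 (runC S f c1 σ) (i-1)).erase s := by
  rw [hybrid_freeAfter h1i hik (le_refl i), Nat.sub_self, freeAfter_zero, freeOf_decCap]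
  · congr 1
    rw [freeAfter_eq_freeOf, runC_take]
  · rw [useCaps_apply]
    simp [c1]

end Hybrid

/-! ### Structure of singleton symmetric differences -/

lemma sdiff_singleton_facts {A B : Finset ℝ} {x : ℝ} (hd : A \ B = {x}) :
    x ∈ A ∧ x ∉ B := by
  have : x ∈ A \ B := hd ▸ Finset.mem_singleton_self x
  exact Finset.mem_sdiff.mp this

lemma diff_insert {A B : Finset ℝ} {x y : ℝ} (h1 : A \ B = {x}) (h2 : B \ A = {y}) :
    B = insert y (A.erase x) := by
  ext z
  simp only [Finset.mem_insert, Finset.mem_erase]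
  constructor
  · intro hz
    by_cases hzA : z ∈ A
    · right
      refine ⟨fun hzx => ?_, hzA⟩
      have hx := Finset.mem_sdiff.mp (h1 ▸ Finset.mem_singleton_self x)
      exact hx.2 (hzx ▸ hz)
    · left
      have hmem : z ∈ B \ A := Finset.mem_sdiff.mpr ⟨hz, hzA⟩
      rw [h2] at hmem
      exact Finset.mem_singleton.mp hmem
  · intro hz
    rcases hz with rfl | ⟨hzx, hzA⟩
    · exact (Finset.mem_sdiff.mp (h2 ▸ Finset.mem_singleton_self z)).1
    · by_contra hzB
      have hmem : z ∈ A \ B := Finset.mem_sdiff.mpr ⟨hzA, hzB⟩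
      rw [h1] at hmem
      exact hzx (Finset.mem_singleton.mp hmem)
/-! ### From hybrid data to a chain -/

lemma chain_merge {S : Finset ℝ} {f : ℝ → Finset ℝ → ℝ} (hp : IsPTCP S f)
    {A B : Finset ℝ} {q aa hh : ℝ}
    (hAS : A ⊆ S) (hBS : B ⊆ S)
    (hdA : A \ B = {aa}) (hdH : B \ A = {hh})
    (heq : A.erase (f q A) = B.erase (f q B)) :
    Reaches f (A.erase aa) aa hh hh := by
  obtain ⟨haA, haB⟩ := sdiff_singleton_facts hdA
  obtain ⟨hhB, hhA⟩ := sdiff_singleton_facts hdH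
  have hBeq : B = insert hh (A.erase aa) := diff_insert hdA hdH
  have hAeq : A = insert aa (A.erase aa) := (Finset.insert_erase haA).symm
  have hu : f q A = aa := by
    by_contra hne'
    have h1' : aa ∈ A.erase (f q A) := Finset.mem_erase.mpr ⟨fun he => hne' he.symm, haA⟩
    rw [heq] at h1'
    exact haB (Finset.mem_of_mem_erase h1')
  have hv : f q B = hh := by
    by_contra hne'
    have h1' : hh ∈ B.erase (f q B) := Finset.mem_erase.mpr ⟨fun he => hne' he.symm, hhB⟩
    rw [← heq] at h1'
    exact hhA (Finset.mem_of_mem_erase h1')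
  exact Reaches.merge _ aa hh q (by rw [← hAeq]; exact hu) (by rw [← hBeq]; exact hv)

lemma chain_step {S : Finset ℝ} {f : ℝ → Finset ℝ → ℝ} (hp : IsPTCP S f)
    {A B A' B' : Finset ℝ} {q aa hh aa' hh' hfin : ℝ}
    (hAS : A ⊆ S) (hBS : B ⊆ S)
    (hdA : A \ B = {aa}) (hdH : B \ A = {hh})
    (hdA' : A' \ B' = {aa'}) (hdH' : B' \ A' = {hh'})
    (hSA : A' = A.erase (f q A)) (hSH : B' = B.erase (f q B))
    (hrec : Reaches f (A'.erase aa') aa' hh' hfin) :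
    Reaches f (A.erase aa) aa hh hfin := by
  obtain ⟨haA, haB⟩ := sdiff_singleton_facts hdA
  obtain ⟨hhB, hhA⟩ := sdiff_singleton_facts hdH
  have hBeq : B = insert hh (A.erase aa) := diff_insert hdA hdH
  have hAeq : A = insert aa (A.erase aa) := (Finset.insert_erase haA).symm
  have haG : aa ∉ A.erase aa := Finset.notMem_erase _ _
  have hhG : hh ∉ A.erase aa := fun hc => hhA (Finset.mem_of_mem_erase hc)
  have huA : f q A ∈ A := ptcp_mem hp q A hAS ⟨aa, haA⟩
  have hvB : f q B ∈ B := ptcp_mem hp q B hBS ⟨hh, hhB⟩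
  by_cases hua : f q A = aa
  · by_cases hvh : f q B = hh
    · exfalso
      have hA' : A' = A.erase aa := by rw [hSA, hua]
      have hB' : B' = A.erase aa := by
        rw [hSH, hvh, hBeq, Finset.erase_insert hhG]
      rw [hA', hB', Finset.sdiff_self] at hdA'
      exact Finset.singleton_ne_empty _ hdA'.symm
    · -- a moves
      have hvBi : f q B ∈ insert hh (A.erase aa) := by rw [← hBeq]; exact hvB
      have hvG : f q B ∈ A.erase aa := by
        rcases Finset.mem_insert.mp hvBi with he | he
        · exact absurd he hvh
        · exact he
      have hA' : A' = A.erase aa := by rw [hSA, hua]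
      have hB' : B' = insert hh ((A.erase aa).erase (f q B)) := by
        rw [hSH]
        nth_rewrite 1 [hBeq]
        rw [Finset.erase_insert_of_ne (fun he => hvh he.symm)]
      have haa' : aa' = f q B := by
        have hmem : f q B ∈ A' \ B' := by
          rw [hA', hB']
          refine Finset.mem_sdiff.mpr ⟨hvG, fun hc => ?_⟩
          rcases Finset.mem_insert.mp hc with he | he
          · exact hvh he
          · exact Finset.notMem_erase _ _ he
        rw [hdA'] at hmem
        exact (Finset.mem_singleton.mp hmem).symm
      have hhh' : hh' = hh := by
        have hmem : hh ∈ B' \ A' := by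
          rw [hA', hB']
          exact Finset.mem_sdiff.mpr ⟨Finset.mem_insert_self _ _, hhG⟩
        rw [hdH'] at hmem
        exact (Finset.mem_singleton.mp hmem).symm
      refine Reaches.amove (A.erase aa) aa hh hfin q (by rw [← hAeq]; exact hua)
        (by rw [← hBeq]; exact hvG) ?_
      rw [← hBeq]
      rw [hA', haa', hhh'] at hrec
      exact hrec
  · have huG : f q A ∈ A.erase aa := Finset.mem_erase.mpr ⟨hua, huA⟩
    have hA' : A' = insert aa ((A.erase aa).erase (f q A)) := by
      rw [hSA]
      nth_rewrite 1 [hAeq]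
      rw [Finset.erase_insert_of_ne (fun he => hua he.symm)]
    by_cases hvh : f q B = hh
    · -- h moves
      have hB' : B' = A.erase aa := by
        rw [hSH, hvh, hBeq, Finset.erase_insert hhG]
      have haa' : aa' = aa := by
        have hmem : aa ∈ A' \ B' := by
          rw [hA', hB']
          exact Finset.mem_sdiff.mpr ⟨Finset.mem_insert_self _ _, haG⟩
        rw [hdA'] at hmem
        exact (Finset.mem_singleton.mp hmem).symm
      have hhh' : hh' = f q A := by
        have hmem : f q A ∈ B' \ A' := by
          rw [hA', hB']
          refine Finset.mem_sdiff.mpr ⟨huG, fun hc => ?_⟩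
          rcases Finset.mem_insert.mp hc with he | he
          · exact hua he
          · exact Finset.notMem_erase _ _ he
        rw [hdH'] at hmem
        exact (Finset.mem_singleton.mp hmem).symm
      refine Reaches.hmove (A.erase aa) aa hh hfin q (by rw [← hBeq]; exact hvh)
        (by rw [← hAeq]; exact huG) ?_
      rw [← hAeq]
      rw [hA', haa', hhh'] at hrec
      rwa [Finset.erase_insert (fun hc => haG (Finset.mem_of_mem_erase hc))] at hrec
    · by_cases huv : f q A = f q B
      · -- same
        have hB' : B' = insert hh ((A.erase aa).erase (f q A)) := by
          rw [hSH]
          nth_rewrite 1 [hBeq]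
          rw [Finset.erase_insert_of_ne (fun he => hvh he.symm), ← huv]
        have haa' : aa' = aa := by
          have hmem : aa ∈ A' \ B' := by
            rw [hA', hB']
            refine Finset.mem_sdiff.mpr ⟨Finset.mem_insert_self _ _, fun hc => ?_⟩
            rcases Finset.mem_insert.mp hc with he | he
            · exact hhA (he ▸ haA)
            · exact haG (Finset.mem_of_mem_erase he)
          rw [hdA'] at hmem
          exact (Finset.mem_singleton.mp hmem).symm
        have hhh' : hh' = hh := by
          have hmem : hh ∈ B' \ A' := by
            rw [hA', hB']
            refine Finset.mem_sdiff.mpr ⟨Finset.mem_insert_self _ _, fun hc => ?_⟩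
            rcases Finset.mem_insert.mp hc with he | he
            · exact hhA (he.symm ▸ haA)
            · exact hhG (Finset.mem_of_mem_erase he)
          rw [hdH'] at hmem
          exact (Finset.mem_singleton.mp hmem).symm
        refine Reaches.same (A.erase aa) aa hh hfin q
          (by rw [← hAeq, ← hBeq]; exact huv) (by rw [← hAeq]; exact huG) ?_
        rw [← hAeq]
        rw [hA', haa', hhh'] at hrec
        rwa [Finset.erase_insert (fun hc => haG (Finset.mem_of_mem_erase hc))] at hrec
      · exfalso
        have hvBi : f q B ∈ insert hh (A.erase aa) := by rw [← hBeq]; exact hvB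
        have hvG : f q B ∈ A.erase aa := by
          rcases Finset.mem_insert.mp hvBi with he | he
          · exact absurd he hvh
          · exact he
        have h1' : f q B ∈ A' \ B' := by
          rw [hSA, hSH]
          exact Finset.mem_sdiff.mpr
            ⟨Finset.mem_erase.mpr ⟨fun he => huv he.symm, Finset.mem_of_mem_erase hvG⟩,
              Finset.notMem_erase _ _⟩
        have h2' : aa ∈ A' \ B' := by
          rw [hSA, hSH]
          exact Finset.mem_sdiff.mpr
            ⟨Finset.mem_erase.mpr ⟨fun he => hua he.symm, haA⟩,
              fun hc => haB (Finset.mem_of_mem_erase hc)⟩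
        rw [hdA'] at h1' h2'
        have hfb : f q B = aa :=
          (Finset.mem_singleton.mp h1').trans (Finset.mem_singleton.mp h2').symm
        exact haG (hfb ▸ hvG)

/-! ### PTCP satisfies (C3) -/

lemma ptcp_C3 {S : Finset ℝ} {f : ℝ → Finset ℝ → ℝ} (hp : IsPTCP S f) : C3 S f := by
  intro hcard σ hlen i h1i hik s hsfree hsne hsurr tstar a h hd
  obtain ⟨hit, htc, hai, hhi, hdiffs, heqs⟩ := hd
  have hilen : i ≤ σ.length := by omega
  have hi1len : i - 1 < σ.length := by omega
  have hm : mtch S f c1 σ (i-1)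
      = f (σ.getD (i-1) 0) (freeAfter S c1 (runC S f c1 σ) (i-1)) :=
    runC_getD c1 σ (i-1) hi1len
  have hFsub : freeAfter S c1 (runC S f c1 σ) (i-1) ⊆ S := Finset.filter_subset _ _
  have hFne : (freeAfter S c1 (runC S f c1 σ) (i-1)).Nonempty := ⟨s, hsfree⟩
  have hsnem : s ≠ f (σ.getD (i-1) 0) (freeAfter S c1 (runC S f c1 σ) (i-1)) := by
    rw [← hm]; exact hsne
  have hnfb : NoFreeBetween (freeAfter S c1 (runC S f c1 σ) (i-1)) s
      (f (σ.getD (i-1) 0) (freeAfter S c1 (runC S f c1 σ) (i-1))) := by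
    rcases hsurr with hss | ⟨_, hnf⟩
    · obtain ⟨hsF, hscond⟩ := hss
      obtain ⟨hmF, hmcond⟩ :=
        ptcp_surr hp (σ.getD (i-1) 0) (freeAfter S c1 (runC S f c1 σ) (i-1)) hFsub hFne
      intro y hyF hy
      by_cases hrF : σ.getD (i-1) 0 ∈ freeAfter S c1 (runC S f c1 σ) (i-1)
      · rw [if_pos hrF] at hscond hmcond
        exact hsnem (hscond.trans hmcond.symm)
      · rw [if_neg hrF] at hscond hmcond
        obtain ⟨hy1, hy2⟩ := hy
        rcases hscond with ⟨hs1, hs2⟩ | ⟨hs1, hs2⟩ <;>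
          rcases hmcond with ⟨hm1, hm2⟩ | ⟨hm1, hm2⟩
        · rcases hs2 _ hmF with h' | h' <;> rcases hm2 s hsF with h'' | h''
          · exact hsnem (le_antisymm h'' h')
          · linarith
          · linarith
          · linarith
        · have hsltm : s < f (σ.getD (i-1) 0) (freeAfter S c1 (runC S f c1 σ) (i-1)) := by
            linarith
          rw [min_eq_left hsltm.le] at hy1
          rw [max_eq_right hsltm.le] at hy2
          rcases hs2 y hyF with h' | h'
          · linarith
          · rcases hm2 y hyF with h'' | h'' <;> linarith
        · have hmlts : f (σ.getD (i-1) 0) (freeAfter S c1 (runC S f c1 σ) (i-1)) < s := by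
            linarith
          rw [min_eq_right hmlts.le] at hy1
          rw [max_eq_left hmlts.le] at hy2
          rcases hm2 y hyF with h' | h'
          · linarith
          · rcases hs2 y hyF with h'' | h'' <;> linarith
        · rcases hs2 _ hmF with h' | h' <;> rcases hm2 s hsF with h'' | h''
          · linarith
          · linarith
          · linarith
          · exact hsnem (le_antisymm h' h'')
    · rw [hm] at hnf
      exact hnf
  have main : ∀ n t, i ≤ t → t ≤ tstar → tstar - t ≤ n →
      Reaches f ((freeAfter S c1 (runC S f c1 σ) t).erase (a t)) (a t) (h t) (h tstar) := by
    intro n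
    induction n with
    | zero =>
      intro t ht1 ht2 ht3
      have htt : t = tstar := by omega
      subst htt
      exact chain_merge hp (Finset.filter_subset _ _) (Finset.filter_subset _ _)
        (hdiffs t ht1 le_rfl).1 (hdiffs t ht1 le_rfl).2
        (((runA_step σ t (by omega)).symm.trans (heqs (t+1) (le_refl _))).trans
          (hybrid_step h1i hilen ht1 (by omega)))
    | succ n ihn =>
      intro t ht1 ht2 ht3
      by_cases htt : t = tstar
      · subst htt
        exact chain_merge hp (Finset.filter_subset _ _) (Finset.filter_subset _ _)
          (hdiffs t ht1 le_rfl).1 (hdiffs t ht1 le_rfl).2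
          (((runA_step σ t (by omega)).symm.trans (heqs (t+1) (le_refl _))).trans
            (hybrid_step h1i hilen ht1 (by omega)))
      · have htlt : t < tstar := lt_of_le_of_ne ht2 htt
        exact chain_step hp (Finset.filter_subset _ _) (Finset.filter_subset _ _)
          (hdiffs t ht1 ht2).1 (hdiffs t ht1 ht2).2
          (hdiffs (t+1) (by omega) (by omega)).1 (hdiffs (t+1) (by omega) (by omega)).2
          (runA_step σ t (by omega)) (hybrid_step h1i hilen ht1 (by omega))
          (ihn (t+1) (by omega) (by omega) (by omega))
  have hstart := main (tstar - i) i le_rfl hit le_rfl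
  have hFAi : freeAfter S c1 (runC S f c1 σ) i
      = (freeAfter S c1 (runC S f c1 σ) (i-1)).erase
          (f (σ.getD (i-1) 0) (freeAfter S c1 (runC S f c1 σ) (i-1))) := by
    have hstep := runA_step (S := S) (f := f) σ (i-1) hi1len
    rw [show i - 1 + 1 = i by omega] at hstep
    exact hstep
  rw [hai, hhi, hm, hFAi, finset_erase_comm] at hstart
  rw [hai]
  exact ptcp_key hp (freeAfter S c1 (runC S f c1 σ) (i-1)) (σ.getD (i-1) 0) s (h tstar)
    hFsub hsfree hsnem hnfb hstart


/-- For every server layout `S` on the line, `C(A*[S],S)`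
holds: the PTCP algorithm is faithful, surrounding-oriented and satisfies (C3). -/
theorem ptcp_Cprop
    (S : Finset ℝ) (hS : S.Nonempty)
    (f : ℝ → Finset ℝ → ℝ) (hf : IsPTCP S f) :
    CProp S f :=
  ⟨ptcp_faithful hf, ptcp_surrOriented hf, ptcp_C3 hf⟩

end OFAL
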